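/- arXiv:2309.03163 — 5 statements merged into one kernel-verified Lean document; each statement's English description precedes it below -/
import Mathlib

section
/- For the MMA(1) process X_j = max(c_0 ξ_j, c_1 ξ_{j+1}) built from an i.i.d. nonnegative regularly varying sequence (ξ_j) with index α, one has lim_{x→∞} P(X_1 > x ∣ X_0 > x) = (min(c_0,c_1))^α / (c_0^α + c_1^α), where P(X_1 > x ∣ X_0 > x) = P(X_0 > x, X_1 > x)/P(X_0 > x). -/
open MeasureTheory Filter ProbabilityTheory

private lemma aux_tendsto (G N D : ℝ → ℝ) (c0 c1 α : ℝ)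
    (hc0 : 0 < c0) (hc1 : 0 < c1)
    (hGpos : ∀ x, 0 < G x) (hDpos : ∀ x, 0 < D x)
    (hG0 : Tendsto G atTop (nhds 0))
    (hRVdiv : ∀ c : ℝ, 0 < c → Tendsto (fun x => G (x / c) / G x) atTop (nhds (c ^ α)))
    (hD : ∀ x, D x = G (x / c0) + G (x / c1) - G (x / c0) * G (x / c1))
    (hNlow : ∀ x, 0 < x → G (x / min c0 c1) ≤ N x)
    (hNup : ∀ x, N x ≤ G (x / min c0 c1)
        + (G (x / c0) * G (x / c0) + (G (x / c0) * G (x / c1) + G (x / c1) * G (x / c1)))) :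
    Tendsto (fun x => N x / D x) atTop
      (nhds ((min c0 c1) ^ α / (c0 ^ α + c1 ^ α))) := by
  have hm : 0 < min c0 c1 := lt_min hc0 hc1
  have hGc0 : Tendsto (fun x => G (x / c0)) atTop (nhds 0) :=
    hG0.comp (tendsto_id.atTop_div_const hc0)
  have hGc1 : Tendsto (fun x => G (x / c1)) atTop (nhds 0) :=
    hG0.comp (tendsto_id.atTop_div_const hc1)
  have hDG : Tendsto (fun x => D x / G x) atTop (nhds (c0 ^ α + c1 ^ α)) := by
    have h : Tendsto
        (fun x => G (x / c0) / G x + G (x / c1) / G x - (G (x / c0) / G x) * G (x / c1))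
        atTop (nhds (c0 ^ α + c1 ^ α - c0 ^ α * 0)) :=
      ((hRVdiv c0 hc0).add (hRVdiv c1 hc1)).sub ((hRVdiv c0 hc0).mul hGc1)
    rw [mul_zero, sub_zero] at h
    refine h.congr fun x => ?_
    rw [hD x]; ring
  have hNG : Tendsto (fun x => N x / G x) atTop (nhds ((min c0 c1) ^ α)) := by
    have hup : Tendsto (fun x => G (x / min c0 c1) / G x
        + ((G (x / c0) / G x) * G (x / c0) + ((G (x / c0) / G x) * G (x / c1)
            + (G (x / c1) / G x) * G (x / c1))))
        atTop (nhds ((min c0 c1) ^ α + (c0 ^ α * 0 + (c0 ^ α * 0 + c1 ^ α * 0)))) :=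
      (hRVdiv _ hm).add (((hRVdiv c0 hc0).mul hGc0).add
        (((hRVdiv c0 hc0).mul hGc1).add ((hRVdiv c1 hc1).mul hGc1)))
    norm_num at hup
    refine tendsto_of_tendsto_of_tendsto_of_le_of_le' (hRVdiv _ hm) hup ?_ ?_
    · filter_upwards [eventually_gt_atTop (0 : ℝ)] with x hx
      exact div_le_div_of_nonneg_right (hNlow x hx) (hGpos x).le
    · filter_upwards with x
      calc N x / G x
          ≤ (G (x / min c0 c1) + (G (x / c0) * G (x / c0)
              + (G (x / c0) * G (x / c1) + G (x / c1) * G (x / c1)))) / G x :=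
            div_le_div_of_nonneg_right (hNup x) (hGpos x).le
        _ = G (x / min c0 c1) / G x
            + ((G (x / c0) / G x) * G (x / c0) + ((G (x / c0) / G x) * G (x / c1)
                + (G (x / c1) / G x) * G (x / c1))) := by ring
  have hne : c0 ^ α + c1 ^ α ≠ 0 := by positivity
  have hfin := hNG.div hDG hne
  refine hfin.congr fun x => ?_
  show N x / G x / (D x / G x) = N x / D x
  rw [div_div_div_eq, mul_comm (G x) (D x), mul_div_mul_right _ _ (hGpos x).ne']

/-- For the MMA(1) process `X j = max (c₀ ξ j) (c₁ ξ (j+1))`,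
`lim_{x→∞} P(X₁ > x ∣ X₀ > x) = (min c₀ c₁)^α / (c₀^α + c₁^α)`, where the conditional
probability is `P(X₀ > x, X₁ > x)/P(X₀ > x)`. -/
theorem stmt_1
    {Ω : Type*} [MeasurableSpace Ω] (P : Measure Ω) [IsProbabilityMeasure P]
    (ξ : ℤ → Ω → ℝ) (hmeas : ∀ j, Measurable (ξ j))
    (hindep : iIndepFun ξ P)
    (hident : ∀ j, Measure.map (ξ j) P = Measure.map (ξ 0) P)
    (hnonneg : ∀ j ω, 0 ≤ ξ j ω)
    (hpos : ∀ x : ℝ, 0 < P {ω | ξ 0 ω > x})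
    (α : ℝ) (hα : 0 < α)
    (hRV : ∀ t : ℝ, 0 < t →
      Tendsto (fun x : ℝ => (P {ω | ξ 0 ω > t * x}).toReal / (P {ω | ξ 0 ω > x}).toReal)
        atTop (nhds (t ^ (-α))))
    (c0 c1 : ℝ) (hc0 : 0 < c0) (hc1 : 0 < c1)
    (X : ℤ → Ω → ℝ) (hX : ∀ j ω, X j ω = max (c0 * ξ j ω) (c1 * ξ (j + 1) ω)) :
    Tendsto (fun x : ℝ =>
        (P ({ω | X 0 ω > x} ∩ {ω | X 1 ω > x})).toReal / (P {ω | X 0 ω > x}).toReal)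
      atTop (nhds ((min c0 c1) ^ α / (c0 ^ α + c1 ^ α))) := by
  have hfin : ∀ s : Set Ω, P s ≠ ⊤ := fun s => (measure_lt_top P s).ne
  have hGpos : ∀ x : ℝ, 0 < (P {ω | ξ 0 ω > x}).toReal := fun x =>
    ENNReal.toReal_pos (hpos x).ne' (hfin _)
  have hmsI : ∀ (j : ℤ) (y : ℝ), MeasurableSet {ω | ξ j ω > y} := fun j y =>
    measurableSet_lt measurable_const (hmeas j)
  have hid : ∀ (j : ℤ) (y : ℝ), P {ω | ξ j ω > y} = P {ω | ξ 0 ω > y} := by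
    intro j y
    have h1 : {ω | ξ j ω > y} = ξ j ⁻¹' Set.Ioi y := rfl
    have h2 : {ω | ξ 0 ω > y} = ξ 0 ⁻¹' Set.Ioi y := rfl
    rw [h1, h2, ← Measure.map_apply (hmeas j) measurableSet_Ioi,
      ← Measure.map_apply (hmeas 0) measurableSet_Ioi, hident j]
  have hmul : ∀ (i j : ℤ), i ≠ j → ∀ s t : ℝ,
      P ({ω | ξ i ω > s} ∩ {ω | ξ j ω > t})
        = P {ω | ξ 0 ω > s} * P {ω | ξ 0 ω > t} := by
    intro i j hij s t
    have h := (hindep.indepFun hij).measure_inter_preimage_eq_mul (Set.Ioi s) (Set.Ioi t)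
      measurableSet_Ioi measurableSet_Ioi
    have h1 : ξ i ⁻¹' Set.Ioi s = {ω | ξ i ω > s} := rfl
    have h2 : ξ j ⁻¹' Set.Ioi t = {ω | ξ j ω > t} := rfl
    rw [h1, h2, hid i s, hid j t] at h
    exact h
  -- G tends to zero
  have hGanti : Antitone (fun x : ℝ => (P {ω | ξ 0 ω > x}).toReal) := fun a b hab =>
    ENNReal.toReal_mono (hfin _) (measure_mono fun ω h => lt_of_le_of_lt hab h)
  have hG0 : Tendsto (fun x : ℝ => (P {ω | ξ 0 ω > x}).toReal) atTop (nhds 0) := by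
    have hbdd : BddBelow (Set.range fun x : ℝ => (P {ω | ξ 0 ω > x}).toReal) :=
      ⟨0, by rintro y ⟨x, rfl⟩; exact ENNReal.toReal_nonneg⟩
    have hlim := tendsto_atTop_ciInf hGanti hbdd
    have hL0 : (⨅ x : ℝ, (P {ω | ξ 0 ω > x}).toReal) = 0 := by
      by_contra hne
      have h2 : Tendsto (fun x : ℝ => (P {ω | ξ 0 ω > 2 * x}).toReal) atTop
          (nhds (⨅ x : ℝ, (P {ω | ξ 0 ω > x}).toReal)) :=
        hlim.comp (Tendsto.const_mul_atTop two_pos tendsto_id)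
      have h3 := h2.div hlim hne
      have h4 := tendsto_nhds_unique h3 (hRV 2 two_pos)
      rw [div_self hne] at h4
      have h5 : (2 : ℝ) ^ (-α) < 1 :=
        Real.rpow_lt_one_of_one_lt_of_neg one_lt_two (neg_lt_zero.mpr hα)
      rw [← h4] at h5
      exact lt_irrefl _ h5
    rw [hL0] at hlim
    exact hlim
  -- RV in the form needed
  have hRVdiv : ∀ c : ℝ, 0 < c → Tendsto
      (fun x : ℝ => (P {ω | ξ 0 ω > x / c}).toReal / (P {ω | ξ 0 ω > x}).toReal)
      atTop (nhds (c ^ α)) := by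
    intro c hc
    have h := hRV c⁻¹ (inv_pos.mpr hc)
    have heq : (c⁻¹ : ℝ) ^ (-α) = c ^ α := by
      rw [Real.inv_rpow hc.le, Real.rpow_neg hc.le, inv_inv]
    rw [heq] at h
    refine h.congr fun x => ?_
    rw [inv_mul_eq_div]
  -- set identities
  have hU0 : ∀ x : ℝ, {ω | X 0 ω > x} = {ω | ξ 0 ω > x / c0} ∪ {ω | ξ 1 ω > x / c1} := by
    intro x
    ext ω
    simp only [Set.mem_setOf_eq, Set.mem_union, hX, gt_iff_lt, lt_max_iff, zero_add,
      div_lt_iff₀ hc0, div_lt_iff₀ hc1, mul_comm]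
  have hU1 : ∀ x : ℝ, {ω | X 1 ω > x} = {ω | ξ 1 ω > x / c0} ∪ {ω | ξ 2 ω > x / c1} := by
    intro x
    ext ω
    have h12 : (1 + 1 : ℤ) = 2 := by norm_num
    simp only [Set.mem_setOf_eq, Set.mem_union, hX, gt_iff_lt, lt_max_iff, h12,
      div_lt_iff₀ hc0, div_lt_iff₀ hc1, mul_comm]
  -- denominator
  have hDpos : ∀ x : ℝ, 0 < (P {ω | X 0 ω > x}).toReal := by
    intro x
    refine ENNReal.toReal_pos ?_ (hfin _)
    refine (lt_of_lt_of_le (hpos (x / c0)) (measure_mono ?_)).ne'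
    rw [hU0 x]
    exact Set.subset_union_left
  have hD : ∀ x : ℝ, (P {ω | X 0 ω > x}).toReal
      = (P {ω | ξ 0 ω > x / c0}).toReal + (P {ω | ξ 0 ω > x / c1}).toReal
        - (P {ω | ξ 0 ω > x / c0}).toReal * (P {ω | ξ 0 ω > x / c1}).toReal := by
    intro x
    rw [hU0 x]
    have key := measure_union_add_inter (μ := P) {ω | ξ 0 ω > x / c0} (hmsI 1 (x / c1))
    rw [hmul 0 1 (by decide) (x / c0) (x / c1)] at key
    have h1 := congrArg ENNReal.toReal key
    rw [ENNReal.toReal_add (hfin _) (ENNReal.mul_ne_top (hfin _) (hfin _)),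
      ENNReal.toReal_add (hfin _) (hfin _), ENNReal.toReal_mul, hid 1] at h1
    linarith
  -- numerator lower bound
  have hNsub' : ∀ x : ℝ, 0 < x →
      {ω | ξ 1 ω > x / min c0 c1} ⊆ {ω | X 0 ω > x} ∩ {ω | X 1 ω > x} := by
    intro x hx ω h
    have hm : 0 < min c0 c1 := lt_min hc0 hc1
    have h1 : x / c1 < ξ 1 ω :=
      lt_of_le_of_lt (div_le_div_of_nonneg_left hx.le hm (min_le_right _ _)) h
    have h0 : x / c0 < ξ 1 ω :=
      lt_of_le_of_lt (div_le_div_of_nonneg_left hx.le hm (min_le_left _ _)) h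
    constructor
    · show ω ∈ {ω | X 0 ω > x}
      rw [hU0 x]
      exact Or.inr h1
    · show ω ∈ {ω | X 1 ω > x}
      rw [hU1 x]
      exact Or.inl h0
  have hNlow : ∀ x : ℝ, 0 < x → (P {ω | ξ 0 ω > x / min c0 c1}).toReal ≤
      (P ({ω | X 0 ω > x} ∩ {ω | X 1 ω > x})).toReal := by
    intro x hx
    rw [← hid 1 (x / min c0 c1)]
    exact ENNReal.toReal_mono (hfin _) (measure_mono (hNsub' x hx))
  -- numerator upper bound
  have hNsub : ∀ x : ℝ, {ω | X 0 ω > x} ∩ {ω | X 1 ω > x} ⊆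
      {ω | ξ 1 ω > x / min c0 c1} ∪ (({ω | ξ 0 ω > x / c0} ∩ {ω | ξ 1 ω > x / c0})
        ∪ (({ω | ξ 0 ω > x / c0} ∩ {ω | ξ 2 ω > x / c1})
          ∪ ({ω | ξ 1 ω > x / c1} ∩ {ω | ξ 2 ω > x / c1}))) := by
    intro x ω hω
    obtain ⟨h0, h1⟩ := hω
    rw [hU0 x] at h0
    rw [hU1 x] at h1
    rcases h0 with h0 | h0 <;> rcases h1 with h1 | h1
    · exact Or.inr (Or.inl ⟨h0, h1⟩)
    · exact Or.inr (Or.inr (Or.inl ⟨h0, h1⟩))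
    · left
      rcases le_total c0 c1 with h | h
      · show ξ 1 ω > x / min c0 c1
        rw [min_eq_left h]
        exact h1
      · show ξ 1 ω > x / min c0 c1
        rw [min_eq_right h]
        exact h0
    · exact Or.inr (Or.inr (Or.inr ⟨h0, h1⟩))
  have hNup : ∀ x : ℝ, (P ({ω | X 0 ω > x} ∩ {ω | X 1 ω > x})).toReal ≤
      (P {ω | ξ 0 ω > x / min c0 c1}).toReal
      + ((P {ω | ξ 0 ω > x / c0}).toReal * (P {ω | ξ 0 ω > x / c0}).toReal
        + ((P {ω | ξ 0 ω > x / c0}).toReal * (P {ω | ξ 0 ω > x / c1}).toReal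
          + (P {ω | ξ 0 ω > x / c1}).toReal * (P {ω | ξ 0 ω > x / c1}).toReal)) := by
    intro x
    have h1 : P ({ω | X 0 ω > x} ∩ {ω | X 1 ω > x}) ≤
        P {ω | ξ 0 ω > x / min c0 c1}
        + (P {ω | ξ 0 ω > x / c0} * P {ω | ξ 0 ω > x / c0}
          + (P {ω | ξ 0 ω > x / c0} * P {ω | ξ 0 ω > x / c1}
            + P {ω | ξ 0 ω > x / c1} * P {ω | ξ 0 ω > x / c1})) := by
      refine le_trans (measure_mono (hNsub x)) ?_
      refine le_trans (measure_union_le _ _) ?_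
      rw [hid 1 (x / min c0 c1)]
      refine add_le_add le_rfl ?_
      refine le_trans (measure_union_le _ _) ?_
      rw [hmul 0 1 (by decide) (x / c0) (x / c0)]
      refine add_le_add le_rfl ?_
      refine le_trans (measure_union_le _ _) ?_
      rw [hmul 0 2 (by decide) (x / c0) (x / c1), hmul 1 2 (by decide) (x / c1) (x / c1)]
    have hne2 : ∀ a b : Set Ω, P a * P b ≠ ⊤ := fun a b =>
      ENNReal.mul_ne_top (hfin _) (hfin _)
    have h2 := ENNReal.toReal_mono (by
      refine ENNReal.add_ne_top.mpr ⟨hfin _, ?_⟩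
      refine ENNReal.add_ne_top.mpr ⟨hne2 _ _, ?_⟩
      exact ENNReal.add_ne_top.mpr ⟨hne2 _ _, hne2 _ _⟩) h1
    rw [ENNReal.toReal_add (hfin _) (by
        refine ENNReal.add_ne_top.mpr ⟨hne2 _ _, ?_⟩
        exact ENNReal.add_ne_top.mpr ⟨hne2 _ _, hne2 _ _⟩),
      ENNReal.toReal_add (hne2 _ _) (ENNReal.add_ne_top.mpr ⟨hne2 _ _, hne2 _ _⟩),
      ENNReal.toReal_add (hne2 _ _) (hne2 _ _), ENNReal.toReal_mul, ENNReal.toReal_mul,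
      ENNReal.toReal_mul] at h2
    exact h2
  exact aux_tendsto (fun x => (P {ω | ξ 0 ω > x}).toReal)
    (fun x => (P ({ω | X 0 ω > x} ∩ {ω | X 1 ω > x})).toReal)
    (fun x => (P {ω | X 0 ω > x}).toReal) c0 c1 α hc0 hc1 hGpos hDpos hG0 hRVdiv hD hNlow hNup
end

section
/- (Small blocks probability of exceedances in two adjacent blocks, MMA(1).) If in addition r_n^2 w_n → 0, then lim_{n→∞} P(A_1 ∩ A_2)/w_n = (min(c_0,c_1))^α / (c_0^α + c_1^α). -/
open MeasureTheory Filter ProbabilityTheory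
open scoped ENNReal

lemma stmt2_tail_tendsto_zero {Ω : Type*} [MeasurableSpace Ω] (P : Measure Ω)
    [IsProbabilityMeasure P] (f : Ω → ℝ) (hf : Measurable f) :
    Tendsto (fun x : ℝ => (P {ω | f ω > x}).toReal) atTop (nhds 0) := by
  have hnat : Tendsto (fun k : ℕ => P {ω | f ω > (k : ℝ)}) atTop (nhds 0) := by
    have hI : (⋂ k : ℕ, {ω | f ω > (k : ℝ)}) = ∅ := by
      ext ω
      simp only [Set.mem_iInter, Set.mem_setOf_eq, Set.mem_empty_iff_false, iff_false, not_forall,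
        not_lt]
      obtain ⟨k, hk⟩ := exists_nat_gt (f ω)
      exact ⟨k, hk.le⟩
    have h := tendsto_measure_iInter_atTop (μ := P) (s := fun k : ℕ => {ω | f ω > (k : ℝ)})
      (fun k => ((hf measurableSet_Ioi).nullMeasurableSet))
      (fun k l hkl ω hω => by
        simp only [Set.mem_setOf_eq] at *
        exact lt_of_le_of_lt (Nat.cast_le.2 hkl) hω)
      ⟨0, measure_ne_top P _⟩
    rw [hI] at h
    simpa [Function.comp_def] using h
  have hnatR : Tendsto (fun k : ℕ => (P {ω | f ω > (k : ℝ)}).toReal) atTop (nhds 0) := by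
    simpa [Function.comp_def] using (ENNReal.tendsto_toReal (by simp) |>.comp hnat)
  apply tendsto_of_tendsto_of_tendsto_of_le_of_le' tendsto_const_nhds
    (hnatR.comp tendsto_nat_floor_atTop)
  · exact Eventually.of_forall fun x => ENNReal.toReal_nonneg
  · filter_upwards [eventually_ge_atTop (0 : ℝ)] with x hx
    exact ENNReal.toReal_mono (measure_ne_top P _)
      (measure_mono fun ω hω => lt_of_le_of_lt (Nat.floor_le hx) hω)

/-- Small blocks probability of exceedances in two adjacent blocks, MMA(1):
if `r_n^2 w_n → 0`, then `lim P(A₁ ∩ A₂)/w_n = (min c₀ c₁)^α / (c₀^α + c₁^α)`. -/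
theorem stmt_2
    {Ω : Type*} [MeasurableSpace Ω] (P : Measure Ω) [IsProbabilityMeasure P]
    (ξ : ℤ → Ω → ℝ) (hmeas : ∀ j, Measurable (ξ j))
    (hindep : iIndepFun ξ P)
    (hident : ∀ j, Measure.map (ξ j) P = Measure.map (ξ 0) P)
    (hnonneg : ∀ j ω, 0 ≤ ξ j ω)
    (hpos : ∀ x : ℝ, 0 < P {ω | ξ 0 ω > x})
    (α : ℝ) (hα : 0 < α)
    (hRV : ∀ t : ℝ, 0 < t →
      Tendsto (fun x : ℝ => (P {ω | ξ 0 ω > t * x}).toReal / (P {ω | ξ 0 ω > x}).toReal)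
        atTop (nhds (t ^ (-α))))
    (c0 c1 : ℝ) (hc0 : 0 < c0) (hc1 : 0 < c1)
    (X : ℤ → Ω → ℝ) (hX : ∀ j ω, X j ω = max (c0 * ξ j ω) (c1 * ξ (j + 1) ω))
    (u : ℕ → ℝ) (hu : Tendsto u atTop atTop)
    (w : ℕ → ℝ) (hw : ∀ n, w n = (P {ω | X 0 ω > u n}).toReal)
    (r : ℕ → ℕ) (hrpos : ∀ n, 0 < r n)
    (hr : Tendsto (fun n => (r n : ℝ)) atTop atTop)
    (hrw : Tendsto (fun n => (r n : ℝ) * w n) atTop (nhds 0))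
    (A : ℕ → ℤ → Set Ω)
    (hA : ∀ n (j : ℤ), A n j =
      {ω | ∃ i : ℤ, (j - 1) * (r n : ℤ) + 1 ≤ i ∧ i ≤ j * (r n : ℤ) ∧ X i ω > u n})
    (hsmall : Tendsto (fun n => (r n : ℝ) ^ 2 * w n) atTop (nhds 0)) :
    Tendsto (fun n => (P (A n 1 ∩ A n 2)).toReal / w n)
      atTop (nhds ((min c0 c1) ^ α / (c0 ^ α + c1 ^ α))) := by
  classical
  have key : ∀ c : ℝ, 0 < c → ∀ x y : ℝ, (c⁻¹ * x < y ↔ x < c * y) := by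
    intro c hc x y
    rw [inv_mul_eq_div, div_lt_iff₀ hc, mul_comm]
  have hident' : ∀ (j : ℤ) (x : ℝ), P {ω | ξ j ω > x} = P {ω | ξ 0 ω > x} := by
    intro j x
    show P (ξ j ⁻¹' Set.Ioi x) = P (ξ 0 ⁻¹' Set.Ioi x)
    rw [← Measure.map_apply (hmeas j) measurableSet_Ioi,
      ← Measure.map_apply (hmeas 0) measurableSet_Ioi, hident j]
  set m := max c0 c1 with hmdef
  set mn := min c0 c1 with hmndef
  have hmpos : 0 < m := lt_max_of_lt_left hc0
  have hmnpos : 0 < mn := lt_min hc0 hc1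
  have hK : (0:ℝ) < c0 ^ α + c1 ^ α := by positivity
  have hppos : ∀ n, 0 < (P {ω | ξ 0 ω > u n}).toReal :=
    fun n => ENNReal.toReal_pos (hpos (u n)).ne' (measure_ne_top P _)
  have hwpos : ∀ n, 0 < w n := by
    intro n
    rw [hw n]
    refine ENNReal.toReal_pos ?_ (measure_ne_top P _)
    refine (lt_of_lt_of_le (hpos (c0⁻¹ * u n)) (measure_mono ?_)).ne'
    intro ω hω
    simp only [Set.mem_setOf_eq] at *
    rw [hX 0 ω]
    exact lt_max_of_lt_left ((key c0 hc0 _ _).1 hω)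
  -- inclusion-exclusion formula for w
  have hwsets : ∀ n, {ω | X 0 ω > u n}
      = (ξ 0 ⁻¹' Set.Ioi (c0⁻¹ * u n)) ∪ (ξ 1 ⁻¹' Set.Ioi (c1⁻¹ * u n)) := by
    intro n; ext ω
    simp only [Set.mem_setOf_eq, gt_iff_lt, hX 0 ω, lt_max_iff, Set.mem_union, Set.mem_preimage,
      Set.mem_Ioi, key c0 hc0, key c1 hc1, zero_add]
  have hw' : ∀ n, w n = (P {ω | ξ 0 ω > c0⁻¹ * u n}).toReal + (P {ω | ξ 0 ω > c1⁻¹ * u n}).toReal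
      - (P {ω | ξ 0 ω > c0⁻¹ * u n}).toReal * (P {ω | ξ 0 ω > c1⁻¹ * u n}).toReal := by
    intro n
    have hind : P ((ξ 0 ⁻¹' Set.Ioi (c0⁻¹ * u n)) ∩ (ξ 1 ⁻¹' Set.Ioi (c1⁻¹ * u n)))
        = P (ξ 0 ⁻¹' Set.Ioi (c0⁻¹ * u n)) * P (ξ 1 ⁻¹' Set.Ioi (c1⁻¹ * u n)) :=
      (hindep.indepFun (by norm_num : (0:ℤ) ≠ 1)).measure_inter_preimage_eq_mul _ _
        measurableSet_Ioi measurableSet_Ioi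
    have hIE := measure_union_add_inter (μ := P) (t := ξ 1 ⁻¹' Set.Ioi (c1⁻¹ * u n))
      (ξ 0 ⁻¹' Set.Ioi (c0⁻¹ * u n)) ((hmeas 1) measurableSet_Ioi)
    rw [hind] at hIE
    have hT1 : P (ξ 1 ⁻¹' Set.Ioi (c1⁻¹ * u n)) = P {ω | ξ 0 ω > c1⁻¹ * u n} := hident' 1 _
    have hS1 : P (ξ 0 ⁻¹' Set.Ioi (c0⁻¹ * u n)) = P {ω | ξ 0 ω > c0⁻¹ * u n} := rfl
    rw [hS1, hT1] at hIE
    have htr := congrArg ENNReal.toReal hIE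
    rw [ENNReal.toReal_add (measure_ne_top P _)
        (ENNReal.mul_ne_top (measure_ne_top P _) (measure_ne_top P _)),
      ENNReal.toReal_add (measure_ne_top P _) (measure_ne_top P _), ENNReal.toReal_mul] at htr
    rw [hw n, hwsets n]
    linarith [htr]
  have hflim : ∀ t : ℝ, 0 < t → Tendsto
      (fun n => (P {ω | ξ 0 ω > t * u n}).toReal / (P {ω | ξ 0 ω > u n}).toReal)
      atTop (nhds (t ^ (-α))) := fun t ht => (hRV t ht).comp hu
  have hrpow : ∀ c : ℝ, 0 < c → (c⁻¹ : ℝ) ^ (-α) = c ^ α := by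
    intro c hc
    rw [Real.inv_rpow hc.le, Real.rpow_neg hc.le, inv_inv]
  have hfzero : ∀ t : ℝ, 0 < t →
      Tendsto (fun n => (P {ω | ξ 0 ω > t * u n}).toReal) atTop (nhds 0) :=
    fun t ht => (stmt2_tail_tendsto_zero P (ξ 0) (hmeas 0)).comp (hu.const_mul_atTop ht)
  have hwp : Tendsto (fun n => w n / (P {ω | ξ 0 ω > u n}).toReal) atTop
      (nhds (c0 ^ α + c1 ^ α)) := by
    have h0 := ((hflim c0⁻¹ (inv_pos.2 hc0)).add (hflim c1⁻¹ (inv_pos.2 hc1))).sub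
      ((hflim c0⁻¹ (inv_pos.2 hc0)).mul (hfzero c1⁻¹ (inv_pos.2 hc1)))
    rw [hrpow c0 hc0, hrpow c1 hc1, mul_zero, sub_zero] at h0
    refine h0.congr fun n => ?_
    have hp0 := (hppos n).ne'
    rw [hw' n]
    field_simp
  have hdivw : ∀ t : ℝ, 0 < t → Tendsto (fun n => (P {ω | ξ 0 ω > t * u n}).toReal / w n) atTop
      (nhds (t ^ (-α) / (c0 ^ α + c1 ^ α))) := by
    intro t ht
    refine ((hflim t ht).div hwp hK.ne').congr fun n => ?_
    have hp0 := (hppos n).ne'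
    have hw0 := (hwpos n).ne'
    simp only [Pi.div_apply]
    field_simp
  have hGlim : Tendsto (fun n => (P {ω | ξ 0 ω > mn⁻¹ * u n}).toReal / w n) atTop
      (nhds (mn ^ α / (c0 ^ α + c1 ^ α))) := by
    have h1 := hdivw mn⁻¹ (inv_pos.2 hmnpos)
    rwa [hrpow mn hmnpos] at h1
  have hmb : Tendsto (fun n => (P {ω | ξ 0 ω > m⁻¹ * u n}).toReal / w n) atTop
      (nhds (m ^ α / (c0 ^ α + c1 ^ α))) := by
    have h1 := hdivw m⁻¹ (inv_pos.2 hmpos)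
    rwa [hrpow m hmpos] at h1
  have herr : Tendsto
      (fun n => (2 * (r n : ℝ) + 1) ^ 2 * (P {ω | ξ 0 ω > m⁻¹ * u n}).toReal ^ 2 / w n)
      atTop (nhds 0) := by
    have h2 : Tendsto (fun n => (2 + ((r n : ℝ))⁻¹) ^ 2
        * ((P {ω | ξ 0 ω > m⁻¹ * u n}).toReal / w n) ^ 2 * ((r n : ℝ) ^ 2 * w n)) atTop
        (nhds ((2 + 0) ^ 2 * (m ^ α / (c0 ^ α + c1 ^ α)) ^ 2 * 0)) :=
      (((tendsto_const_nhds.add hr.inv_tendsto_atTop).pow 2).mul (hmb.pow 2)).mul hsmall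
    rw [mul_zero] at h2
    refine h2.congr fun n => ?_
    have hrn : ((r n : ℝ)) ≠ 0 := Nat.cast_ne_zero.2 (hrpos n).ne'
    have hw0 : w n ≠ 0 := (hwpos n).ne'
    field_simp
  -- events
  set B : ℕ → ℤ → Set Ω := fun n k => {ω | ξ k ω > m⁻¹ * u n} with hB
  set G : ℕ → Set Ω := fun n => {ω | ξ ((r n : ℤ) + 1) ω > mn⁻¹ * u n} with hG
  set pr : ℕ → Finset (ℤ × ℤ) := fun n =>
    (Finset.Icc (1:ℤ) (2 * (r n : ℤ) + 1) ×ˢ Finset.Icc (1:ℤ) (2 * (r n : ℤ) + 1)).filter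
      (fun q => q.1 ≠ q.2) with hpr
  set D : ℕ → Set Ω := fun n => ⋃ q ∈ pr n, B n q.1 ∩ B n q.2 with hD
  have hA1 : ∀ n, A n 1 = {ω | ∃ i : ℤ, 1 ≤ i ∧ i ≤ (r n : ℤ) ∧ X i ω > u n} := by
    intro n; rw [hA n 1]; norm_num
  have hA2 : ∀ n, A n 2 = {ω | ∃ i : ℤ, (r n : ℤ) + 1 ≤ i ∧ i ≤ 2 * (r n : ℤ) ∧ X i ω > u n} := by
    intro n; rw [hA n 2]; norm_num
  have hmono : ∀ (c : ℝ), 0 < c → c ≤ m → ∀ n, 0 < u n → ∀ (k : ℤ) ω,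
      u n < c * ξ k ω → m⁻¹ * u n < ξ k ω := by
    intro c hc hcm n hun k ω h
    have h1 : c⁻¹ * u n < ξ k ω := (key c hc _ _).2 h
    have h2 : m⁻¹ * u n ≤ c⁻¹ * u n :=
      mul_le_mul_of_nonneg_right (inv_anti₀ hc hcm) hun.le
    linarith
  -- lower inclusion
  have hGsub : ∀ n, 0 < u n → G n ⊆ A n 1 ∩ A n 2 := by
    intro n hun ω hω
    have hb : mn⁻¹ * u n < ξ ((r n : ℤ) + 1) ω := hω
    have hR1 : (1:ℤ) ≤ (r n : ℤ) := by exact_mod_cast hrpos n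
    have hb0 : c0⁻¹ * u n < ξ ((r n : ℤ) + 1) ω := by
      have : c0⁻¹ * u n ≤ mn⁻¹ * u n :=
        mul_le_mul_of_nonneg_right (inv_anti₀ hmnpos (min_le_left _ _)) hun.le
      linarith
    have hb1 : c1⁻¹ * u n < ξ ((r n : ℤ) + 1) ω := by
      have : c1⁻¹ * u n ≤ mn⁻¹ * u n :=
        mul_le_mul_of_nonneg_right (inv_anti₀ hmnpos (min_le_right _ _)) hun.le
      linarith
    constructor
    · rw [hA1 n]
      refine ⟨(r n : ℤ), hR1, le_refl _, ?_⟩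
      rw [hX]
      exact lt_max_of_lt_right ((key c1 hc1 _ _).1 hb1)
    · rw [hA2 n]
      refine ⟨(r n : ℤ) + 1, le_refl _, by omega, ?_⟩
      rw [hX]
      exact lt_max_of_lt_left ((key c0 hc0 _ _).1 hb0)
  -- upper inclusion
  have hsub : ∀ n, 0 < u n → A n 1 ∩ A n 2 ⊆ G n ∪ D n := by
    intro n hun ω hω
    obtain ⟨hω1, hω2⟩ := hω
    rw [hA1 n] at hω1
    rw [hA2 n] at hω2
    obtain ⟨i, hi1, hi2, hiX⟩ := hω1
    obtain ⟨j, hj1, hj2, hjX⟩ := hω2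
    have hR1 : (1:ℤ) ≤ (r n : ℤ) := by exact_mod_cast hrpos n
    rw [hX i ω] at hiX
    rw [hX j ω] at hjX
    have hDmem : ∀ k1 k2 : ℤ, 1 ≤ k1 → k1 ≤ 2 * (r n : ℤ) + 1 → 1 ≤ k2 →
        k2 ≤ 2 * (r n : ℤ) + 1 → k1 ≠ k2 →
        m⁻¹ * u n < ξ k1 ω → m⁻¹ * u n < ξ k2 ω → ω ∈ D n := by
      intro k1 k2 h1 h2 h3 h4 h5 hb1 hb2
      refine Set.mem_iUnion₂.2 ⟨(k1, k2), ?_, hb1, hb2⟩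
      simp only [hpr, Finset.mem_filter, Finset.mem_product, Finset.mem_Icc]
      exact ⟨⟨⟨h1, h2⟩, h3, h4⟩, h5⟩
    have claim1 : (∃ k : ℤ, 1 ≤ k ∧ k ≤ (r n : ℤ) ∧ m⁻¹ * u n < ξ k ω) ∨
        c1⁻¹ * u n < ξ ((r n : ℤ) + 1) ω := by
      rcases lt_max_iff.1 hiX with hc | hc
      · exact Or.inl ⟨i, hi1, hi2, hmono c0 hc0 (le_max_left _ _) n hun i ω hc⟩
      · by_cases hie : i + 1 ≤ (r n : ℤ)
        · exact Or.inl ⟨i + 1, by omega, hie, hmono c1 hc1 (le_max_right _ _) n hun _ ω hc⟩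
        · have hiq : i + 1 = (r n : ℤ) + 1 := by omega
          rw [hiq] at hc
          exact Or.inr ((key c1 hc1 _ _).2 hc)
    have claim2 : (∃ k : ℤ, (r n : ℤ) + 2 ≤ k ∧ k ≤ 2 * (r n : ℤ) + 1 ∧ m⁻¹ * u n < ξ k ω) ∨
        c0⁻¹ * u n < ξ ((r n : ℤ) + 1) ω := by
      rcases lt_max_iff.1 hjX with hc | hc
      · by_cases hje : j = (r n : ℤ) + 1
        · rw [hje] at hc
          exact Or.inr ((key c0 hc0 _ _).2 hc)
        · exact Or.inl ⟨j, by omega, by omega, hmono c0 hc0 (le_max_left _ _) n hun _ ω hc⟩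
      · exact Or.inl ⟨j + 1, by omega, by omega, hmono c1 hc1 (le_max_right _ _) n hun _ ω hc⟩
    rcases claim1 with ⟨k1, hk11, hk12, hk1b⟩ | h1R
    · rcases claim2 with ⟨k2, hk21, hk22, hk2b⟩ | h2R
      · exact Or.inr (hDmem k1 k2 hk11 (by omega) (by omega) hk22 (by omega) hk1b hk2b)
      · exact Or.inr (hDmem k1 ((r n : ℤ) + 1) hk11 (by omega) (by omega) (by omega) (by omega)
          hk1b (hmono c0 hc0 (le_max_left _ _) n hun _ ω ((key c0 hc0 _ _).1 h2R)))
    · rcases claim2 with ⟨k2, hk21, hk22, hk2b⟩ | h2R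
      · exact Or.inr (hDmem ((r n : ℤ) + 1) k2 (by omega) (by omega) (by omega) hk22 (by omega)
          (hmono c1 hc1 (le_max_right _ _) n hun _ ω ((key c1 hc1 _ _).1 h1R)) hk2b)
      · left
        show mn⁻¹ * u n < ξ ((r n : ℤ) + 1) ω
        rcases min_cases c0 c1 with ⟨hmin, _⟩ | ⟨hmin, _⟩
        · rw [hmndef, hmin]
          exact (key c0 hc0 _ _).2 ((key c0 hc0 _ _).1 h2R)
        · rw [hmndef, hmin]
          exact (key c1 hc1 _ _).2 ((key c1 hc1 _ _).1 h1R)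
  -- bound on P(D)
  have hPD : ∀ n, (P (D n)).toReal
      ≤ (2 * (r n : ℝ) + 1) ^ 2 * (P {ω | ξ 0 ω > m⁻¹ * u n}).toReal ^ 2 := by
    intro n
    have hterm : ∀ q ∈ pr n, P (B n q.1 ∩ B n q.2)
        = P {ω | ξ 0 ω > m⁻¹ * u n} * P {ω | ξ 0 ω > m⁻¹ * u n} := by
      intro q hq
      simp only [hpr, Finset.mem_filter] at hq
      have hne := hq.2
      have h1 : P (B n q.1 ∩ B n q.2)
          = P (ξ q.1 ⁻¹' Set.Ioi (m⁻¹ * u n)) * P (ξ q.2 ⁻¹' Set.Ioi (m⁻¹ * u n)) :=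
        (hindep.indepFun hne).measure_inter_preimage_eq_mul _ _
          measurableSet_Ioi measurableSet_Ioi
      rw [h1]
      rw [show P (ξ q.1 ⁻¹' Set.Ioi (m⁻¹ * u n)) = P {ω | ξ 0 ω > m⁻¹ * u n} from hident' _ _,
        show P (ξ q.2 ⁻¹' Set.Ioi (m⁻¹ * u n)) = P {ω | ξ 0 ω > m⁻¹ * u n} from hident' _ _]
    have hle1 : P (D n) ≤ ∑ q ∈ pr n, P (B n q.1 ∩ B n q.2) := measure_biUnion_finset_le _ _
    have hsum : ∑ q ∈ pr n, P (B n q.1 ∩ B n q.2)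
        = ((pr n).card : ℝ≥0∞) * (P {ω | ξ 0 ω > m⁻¹ * u n} * P {ω | ξ 0 ω > m⁻¹ * u n}) := by
      rw [Finset.sum_congr rfl hterm, Finset.sum_const, nsmul_eq_mul]
    have hcard : (pr n).card ≤ (2 * r n + 1) ^ 2 := by
      calc (pr n).card
          ≤ ((Finset.Icc (1:ℤ) (2 * (r n : ℤ) + 1)) ×ˢ
              (Finset.Icc (1:ℤ) (2 * (r n : ℤ) + 1))).card := Finset.card_filter_le _ _
        _ = (2 * r n + 1) ^ 2 := by
            rw [Finset.card_product, Int.card_Icc]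
            have hnat : (2 * (r n : ℤ) + 1 + 1 - 1).toNat = 2 * r n + 1 := by omega
            rw [hnat]
            ring
    have hle2 : P (D n) ≤ (((2 * r n + 1) ^ 2 : ℕ) : ℝ≥0∞)
        * (P {ω | ξ 0 ω > m⁻¹ * u n} * P {ω | ξ 0 ω > m⁻¹ * u n}) := by
      refine hle1.trans ?_
      rw [hsum]
      exact mul_le_mul_left (by exact_mod_cast hcard) _
    have hfin2 : (((2 * r n + 1) ^ 2 : ℕ) : ℝ≥0∞)
        * (P {ω | ξ 0 ω > m⁻¹ * u n} * P {ω | ξ 0 ω > m⁻¹ * u n}) ≠ ⊤ :=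
      ENNReal.mul_ne_top (ENNReal.natCast_ne_top _)
        (ENNReal.mul_ne_top (measure_ne_top P _) (measure_ne_top P _))
    calc (P (D n)).toReal
        ≤ ((((2 * r n + 1) ^ 2 : ℕ) : ℝ≥0∞)
          * (P {ω | ξ 0 ω > m⁻¹ * u n} * P {ω | ξ 0 ω > m⁻¹ * u n})).toReal :=
          ENNReal.toReal_mono hfin2 hle2
      _ = (2 * (r n : ℝ) + 1) ^ 2 * (P {ω | ξ 0 ω > m⁻¹ * u n}).toReal ^ 2 := by
          rw [ENNReal.toReal_mul, ENNReal.toReal_mul, ENNReal.toReal_natCast]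
          push_cast
          ring
  have hPG : ∀ n, (P (G n)).toReal = (P {ω | ξ 0 ω > mn⁻¹ * u n}).toReal :=
    fun n => congrArg ENNReal.toReal (hident' _ _)
  -- squeeze inequalities
  have hlow : ∀ n, 0 < u n →
      (P {ω | ξ 0 ω > mn⁻¹ * u n}).toReal / w n ≤ (P (A n 1 ∩ A n 2)).toReal / w n := by
    intro n hun
    refine (div_le_div_iff_of_pos_right (hwpos n)).2 ?_
    rw [← hPG n]
    exact ENNReal.toReal_mono (measure_ne_top P _) (measure_mono (hGsub n hun))
  have hup : ∀ n, 0 < u n → (P (A n 1 ∩ A n 2)).toReal / w n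
      ≤ ((P {ω | ξ 0 ω > mn⁻¹ * u n}).toReal
        + (2 * (r n : ℝ) + 1) ^ 2 * (P {ω | ξ 0 ω > m⁻¹ * u n}).toReal ^ 2) / w n := by
    intro n hun
    refine (div_le_div_iff_of_pos_right (hwpos n)).2 ?_
    have h1 : P (A n 1 ∩ A n 2) ≤ P (G n) + P (D n) :=
      le_trans (measure_mono (hsub n hun)) (measure_union_le _ _)
    have h2 : (P (A n 1 ∩ A n 2)).toReal ≤ (P (G n)).toReal + (P (D n)).toReal := by
      rw [← ENNReal.toReal_add (measure_ne_top P _) (measure_ne_top P _)]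
      exact ENNReal.toReal_mono
        (ENNReal.add_ne_top.2 ⟨measure_ne_top P _, measure_ne_top P _⟩) h1
    have := hPD n
    have := hPG n
    linarith
  have huplim : Tendsto (fun n => ((P {ω | ξ 0 ω > mn⁻¹ * u n}).toReal
      + (2 * (r n : ℝ) + 1) ^ 2 * (P {ω | ξ 0 ω > m⁻¹ * u n}).toReal ^ 2) / w n) atTop
      (nhds (mn ^ α / (c0 ^ α + c1 ^ α))) := by
    have h1 := hGlim.add herr
    rw [add_zero] at h1
    exact h1.congr fun n => (add_div _ _ _).symm
  refine tendsto_of_tendsto_of_tendsto_of_le_of_le' hGlim huplim ?_ ?_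
  · filter_upwards [hu.eventually (eventually_gt_atTop (0:ℝ))] with n hn
    exact hlow n hn
  · filter_upwards [hu.eventually (eventually_gt_atTop (0:ℝ))] with n hn
    exact hup n hn
end

section
/- (Large blocks probability of exceedances in two adjacent blocks, MMA(1).) If in addition r_n^2 w_n → ∞, then lim_{n→∞} P(A_1 ∩ A_2)/(r_n^2 w_n^2) = θ^2, where θ = (max(c_0,c_1))^α / (c_0^α + c_1^α). -/
open MeasureTheory Filter ProbabilityTheory

lemma aux_pow_le (q : ℝ) (hq0 : 0 ≤ q) (hq1 : q ≤ 1) (R : ℕ) :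
    (1 - q) ^ R ≤ 1 - R * q + R * R / 2 * q ^ 2 := by
  induction R with
  | zero => norm_num
  | succ n ih =>
    have h1 : ((1:ℝ) - q) ^ (n + 1) = (1 - q) ^ n * (1 - q) := pow_succ _ _
    have h2 : ((1:ℝ) - q) ^ n * (1 - q) ≤ (1 - n * q + n * n / 2 * q ^ 2) * (1 - q) :=
      mul_le_mul_of_nonneg_right ih (by linarith)
    have h3 : ((1:ℝ) - n * q + n * n / 2 * q ^ 2) * (1 - q)
        ≤ 1 - (n + 1 : ℕ) * q + (n + 1 : ℕ) * (n + 1 : ℕ) / 2 * q ^ 2 := by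
      push_cast
      nlinarith [sq_nonneg q, mul_nonneg (mul_nonneg (Nat.cast_nonneg (α := ℝ) n) hq0) hq0,
        mul_nonneg (mul_nonneg (mul_nonneg (Nat.cast_nonneg (α := ℝ) n) (Nat.cast_nonneg (α := ℝ) n)) hq0) (mul_nonneg hq0 hq0)]
    calc ((1:ℝ) - q) ^ (n+1) = (1 - q) ^ n * (1 - q) := h1
      _ ≤ _ := h2
      _ ≤ _ := h3

lemma aux_one_sub_le (q : ℝ) (hq1 : q ≤ 1) (R : ℕ) : 1 - R * q ≤ (1 - q) ^ R := by
  have := one_add_mul_le_pow (a := -q) (by linarith) R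
  calc (1:ℝ) - R * q = 1 + R * (-q) := by ring
    _ ≤ (1 + -q) ^ R := this
    _ = (1 - q) ^ R := by ring_nf

lemma block_prob
    {Ω : Type*} [MeasurableSpace Ω] (P : Measure Ω) [IsProbabilityMeasure P]
    (ξ : ℤ → Ω → ℝ) (hmeas : ∀ j, Measurable (ξ j))
    (hindep : iIndepFun ξ P)
    (hident : ∀ j, Measure.map (ξ j) P = Measure.map (ξ 0) P)
    (hnonneg : ∀ j ω, 0 ≤ ξ j ω)
    (c0 c1 : ℝ) (hc0 : 0 < c0) (hc1 : 0 < c1)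
    (X : ℤ → Ω → ℝ) (hX : ∀ j ω, X j ω = max (c0 * ξ j ω) (c1 * ξ (j + 1) ω))
    (T : ℝ) (a : ℤ) (L : ℕ) (hL : 1 ≤ L) :
    (P {ω | ∃ i : ℤ, a + 1 ≤ i ∧ i ≤ a + L ∧ X i ω > T}).toReal
      = 1 - (P {ω | ξ 0 ω ≤ T / c0}).toReal * (P {ω | ξ 0 ω ≤ T / c1}).toReal *
          (P {ω | ξ 0 ω ≤ T / max c0 c1}).toReal ^ (L - 1) := by
  set m : ℝ := max c0 c1 with hmdef
  have hm0 : 0 < m := lt_of_lt_of_le hc0 (le_max_left _ _)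
  set d : ℤ → ℝ := fun k => if k = a + 1 then T / c0 else if k = a + 1 + L then T / c1 else T / m
    with hd
  set S : Set Ω := {ω | ∃ i : ℤ, a + 1 ≤ i ∧ i ≤ a + L ∧ X i ω > T} with hS
  have hXmeas : ∀ i, Measurable (X i) := by
    intro i
    have : X i = fun ω => max (c0 * ξ i ω) (c1 * ξ (i + 1) ω) := funext (hX i)
    rw [this]
    exact (measurable_const.mul (hmeas i)).max (measurable_const.mul (hmeas (i + 1)))
  have hSmeas : MeasurableSet S := by
    have : S = ⋃ (i : ℤ), ⋃ (_ : a + 1 ≤ i ∧ i ≤ a + L), {ω | X i ω > T} := by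
      ext ω
      simp only [hS, Set.mem_setOf_eq, Set.mem_iUnion]
      constructor
      · rintro ⟨i, h1, h2, h3⟩; exact ⟨i, ⟨h1, h2⟩, h3⟩
      · rintro ⟨i, ⟨h1, h2⟩, h3⟩; exact ⟨i, h1, h2, h3⟩
    rw [this]
    exact MeasurableSet.iUnion fun i => MeasurableSet.iUnion fun _ =>
      measurableSet_lt measurable_const (hXmeas i)
  -- complement as intersection
  have hcompl : Sᶜ = ⋂ k ∈ Finset.Icc (a + 1) (a + 1 + (L : ℤ)), ξ k ⁻¹' Set.Iic (d k) := by
    ext ω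
    simp only [Set.mem_compl_iff, hS, Set.mem_setOf_eq, not_exists, Set.mem_iInter,
      Finset.mem_Icc, Set.mem_preimage, Set.mem_Iic, not_and, not_lt]
    constructor
    · rintro h k ⟨hk1, hk2⟩
      have hXle : ∀ i : ℤ, a + 1 ≤ i → i ≤ a + L → c0 * ξ i ω ≤ T ∧ c1 * ξ (i + 1) ω ≤ T := by
        intro i hi1 hi2
        have := h i hi1 hi2
        rw [hX i ω] at this
        exact max_le_iff.mp this
      by_cases hk : k = a + 1
      · subst hk
        have h1 := (hXle (a + 1) le_rfl (by omega)).1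
        simp only [hd, if_pos rfl]
        exact (le_div_iff₀' hc0).mpr h1
      · by_cases hk' : k = a + 1 + L
        · have h1 := (hXle (a + L) (by omega) le_rfl).2
          have hke : a + (L : ℤ) + 1 = k := by omega
          rw [hke] at h1
          simp only [hd, if_neg hk, if_pos hk']
          exact (le_div_iff₀' hc1).mpr h1
        · have hk2' : k ≤ a + L := by omega
          have h1 := (hXle k (by omega) hk2').1
          have h2 := (hXle (k - 1) (by omega) (by omega)).2
          rw [show k - 1 + 1 = k by ring] at h2
          simp only [hd, if_neg hk, if_neg hk']
          rw [le_div_iff₀' hm0, hmdef, max_mul_of_nonneg _ _ (hnonneg k ω)]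
          exact max_le h1 h2
    · intro h i hi1 hi2
      rw [hX i ω]
      have hc0m : c0 ≤ m := le_max_left _ _
      have hc1m : c1 ≤ m := le_max_right _ _
      have key : ∀ k : ℤ, a + 1 ≤ k → k ≤ a + 1 + L → m * ξ k ω ≤ T ∨
          (k = a + 1 ∧ c0 * ξ k ω ≤ T) ∨ (k = a + 1 + L ∧ c1 * ξ k ω ≤ T) := by
        intro k hk1 hk2
        have hdk := h k ⟨hk1, hk2⟩
        by_cases hk : k = a + 1
        · right; left
          refine ⟨hk, ?_⟩
          simp only [hd, if_pos hk] at hdk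
          exact (le_div_iff₀' hc0).mp hdk
        · by_cases hk' : k = a + 1 + L
          · right; right
            refine ⟨hk', ?_⟩
            simp only [hd, if_neg hk, if_pos hk'] at hdk
            exact (le_div_iff₀' hc1).mp hdk
          · left
            simp only [hd, if_neg hk, if_neg hk'] at hdk
            exact (le_div_iff₀' hm0).mp hdk
      have h1 : c0 * ξ i ω ≤ T := by
        rcases key i hi1 (by omega) with hv | ⟨_, hv⟩ | ⟨he, _⟩
        · exact le_trans (mul_le_mul_of_nonneg_right hc0m (hnonneg i ω)) hv
        · exact hv
        · omega
      have h2 : c1 * ξ (i + 1) ω ≤ T := by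
        rcases key (i + 1) (by omega) (by omega) with hv | ⟨he, _⟩ | ⟨_, hv⟩
        · exact le_trans (mul_le_mul_of_nonneg_right hc1m (hnonneg (i + 1) ω)) hv
        · omega
        · exact hv
      exact max_le h1 h2
  -- independence product
  have hprod : P Sᶜ = ∏ k ∈ Finset.Icc (a + 1) (a + 1 + (L : ℤ)), P (ξ k ⁻¹' Set.Iic (d k)) := by
    rw [hcompl]
    exact hindep.meas_biInter fun k _ => ⟨Set.Iic (d k), measurableSet_Iic, rfl⟩
  -- identical distribution
  have hfac : ∀ (k : ℤ) (x : ℝ), P (ξ k ⁻¹' Set.Iic x) = P {ω | ξ 0 ω ≤ x} := by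
    intro k x
    have h1 : P (ξ k ⁻¹' Set.Iic x) = (Measure.map (ξ k) P) (Set.Iic x) :=
      (Measure.map_apply (hmeas k) measurableSet_Iic).symm
    have h2 : (Measure.map (ξ 0) P) (Set.Iic x) = P (ξ 0 ⁻¹' Set.Iic x) :=
      Measure.map_apply (hmeas 0) measurableSet_Iic
    rw [h1, hident k, h2]
    rfl
  -- split the product
  have hsplit : Finset.Icc (a + 1) (a + 1 + (L : ℤ))
      = insert (a + 1) (insert (a + 1 + (L : ℤ)) (Finset.Icc (a + 2) (a + (L : ℤ)))) := by
    ext k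
    simp only [Finset.mem_Icc, Finset.mem_insert]
    omega
  have hnotmem1 : (a + 1) ∉ insert (a + 1 + (L : ℤ)) (Finset.Icc (a + 2) (a + (L : ℤ))) := by
    simp only [Finset.mem_insert, Finset.mem_Icc]
    omega
  have hnotmem2 : (a + 1 + (L : ℤ)) ∉ Finset.Icc (a + 2) (a + (L : ℤ)) := by
    simp only [Finset.mem_Icc]
    omega
  have hprodval : ∏ k ∈ Finset.Icc (a + 1) (a + 1 + (L : ℤ)), P (ξ k ⁻¹' Set.Iic (d k))
      = P {ω | ξ 0 ω ≤ T / c0} * (P {ω | ξ 0 ω ≤ T / c1} *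
          P {ω | ξ 0 ω ≤ T / m} ^ (L - 1)) := by
    rw [hsplit, Finset.prod_insert hnotmem1, Finset.prod_insert hnotmem2]
    congr 1
    · rw [hfac]
      congr 1
      simp only [hd, if_pos rfl]
    congr 1
    · rw [hfac]
      congr 1
      have hne : a + 1 + (L : ℤ) ≠ a + 1 := by omega
      simp [hd, hne]
    · have hconst : ∀ k ∈ Finset.Icc (a + 2) (a + (L : ℤ)),
          P (ξ k ⁻¹' Set.Iic (d k)) = P {ω | ξ 0 ω ≤ T / m} := by
        intro k hk
        simp only [Finset.mem_Icc] at hk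
        have h1 : k ≠ a + 1 := by omega
        have h2 : k ≠ a + 1 + (L : ℤ) := by omega
        rw [hfac]
        congr 1
        simp only [hd, if_neg h1, if_neg h2]
      rw [Finset.prod_congr rfl hconst, Finset.prod_const]
      congr 1
      rw [Int.card_Icc]
      omega
  have h1 : (P Sᶜ).toReal = 1 - (P S).toReal := by
    rw [prob_compl_eq_one_sub hSmeas,
      ENNReal.toReal_sub_of_le prob_le_one ENNReal.one_ne_top, ENNReal.toReal_one]
  have h2 : (P Sᶜ).toReal = (P {ω | ξ 0 ω ≤ T / c0}).toReal * (P {ω | ξ 0 ω ≤ T / c1}).toReal *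
      (P {ω | ξ 0 ω ≤ T / m}).toReal ^ (L - 1) := by
    rw [hprod, hprodval, ENNReal.toReal_mul, ENNReal.toReal_mul, ENNReal.toReal_pow]
    ring
  linarith

/-- Large blocks probability of exceedances in two adjacent blocks, MMA(1):
if `r_n^2 w_n → ∞`, then `lim P(A₁ ∩ A₂)/(r_n^2 w_n^2) = θ^2` with
`θ = (max c₀ c₁)^α / (c₀^α + c₁^α)`. -/
theorem stmt_3
    {Ω : Type*} [MeasurableSpace Ω] (P : Measure Ω) [IsProbabilityMeasure P]
    (ξ : ℤ → Ω → ℝ) (hmeas : ∀ j, Measurable (ξ j))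
    (hindep : iIndepFun ξ P)
    (hident : ∀ j, Measure.map (ξ j) P = Measure.map (ξ 0) P)
    (hnonneg : ∀ j ω, 0 ≤ ξ j ω)
    (hpos : ∀ x : ℝ, 0 < P {ω | ξ 0 ω > x})
    (α : ℝ) (hα : 0 < α)
    (hRV : ∀ t : ℝ, 0 < t →
      Tendsto (fun x : ℝ => (P {ω | ξ 0 ω > t * x}).toReal / (P {ω | ξ 0 ω > x}).toReal)
        atTop (nhds (t ^ (-α))))
    (c0 c1 : ℝ) (hc0 : 0 < c0) (hc1 : 0 < c1)
    (X : ℤ → Ω → ℝ) (hX : ∀ j ω, X j ω = max (c0 * ξ j ω) (c1 * ξ (j + 1) ω))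
    (u : ℕ → ℝ) (hu : Tendsto u atTop atTop)
    (w : ℕ → ℝ) (hw : ∀ n, w n = (P {ω | X 0 ω > u n}).toReal)
    (r : ℕ → ℕ) (hrpos : ∀ n, 0 < r n)
    (hr : Tendsto (fun n => (r n : ℝ)) atTop atTop)
    (hrw : Tendsto (fun n => (r n : ℝ) * w n) atTop (nhds 0))
    (A : ℕ → ℤ → Set Ω)
    (hA : ∀ n (j : ℤ), A n j =
      {ω | ∃ i : ℤ, (j - 1) * (r n : ℤ) + 1 ≤ i ∧ i ≤ j * (r n : ℤ) ∧ X i ω > u n})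
    (θ : ℝ) (hθ : θ = (max c0 c1) ^ α / (c0 ^ α + c1 ^ α))
    (hlarge : Tendsto (fun n => (r n : ℝ) ^ 2 * w n) atTop atTop) :
    Tendsto (fun n => (P (A n 1 ∩ A n 2)).toReal / ((r n : ℝ) ^ 2 * w n ^ 2))
      atTop (nhds (θ ^ 2)) := by
  classical
  have hm0 : (0:ℝ) < max c0 c1 := lt_of_lt_of_le hc0 (le_max_left _ _)
  set tl : ℝ → ℝ := fun x => (P {ω | ξ 0 ω > x}).toReal with htldef
  have htl_nonneg : ∀ x, 0 ≤ tl x := fun x => ENNReal.toReal_nonneg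
  have htl_pos : ∀ x, 0 < tl x := fun x =>
    ENNReal.toReal_pos (hpos x).ne' (measure_ne_top P _)
  have hpsi : ∀ x : ℝ, (P {ω | ξ 0 ω ≤ x}).toReal = 1 - tl x := by
    intro x
    have hc : {ω | ξ 0 ω ≤ x} = {ω | ξ 0 ω > x}ᶜ := by
      ext ω; simp [not_lt]
    rw [hc, prob_compl_eq_one_sub (measurableSet_lt measurable_const (hmeas 0)),
      ENNReal.toReal_sub_of_le prob_le_one ENNReal.one_ne_top, ENNReal.toReal_one]
  have hident' : ∀ (k : ℤ) (x : ℝ), P {ω | ξ k ω > x} = P {ω | ξ 0 ω > x} := by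
    intro k x
    have h1 : P (ξ k ⁻¹' Set.Ioi x) = (Measure.map (ξ k) P) (Set.Ioi x) :=
      (Measure.map_apply (hmeas k) measurableSet_Ioi).symm
    have h2 : (Measure.map (ξ 0) P) (Set.Ioi x) = P (ξ 0 ⁻¹' Set.Ioi x) :=
      Measure.map_apply (hmeas 0) measurableSet_Ioi
    have : P (ξ k ⁻¹' Set.Ioi x) = P (ξ 0 ⁻¹' Set.Ioi x) := by rw [h1, hident k, h2]
    exact this
  -- tail of scaled variables dominated by w
  have hsub0 : ∀ n, tl (u n / c0) ≤ w n := by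
    intro n
    rw [hw n, htldef]
    refine ENNReal.toReal_mono (measure_ne_top P _) (measure_mono ?_)
    intro ω hω
    simp only [Set.mem_setOf_eq] at hω ⊢
    rw [hX 0 ω]
    exact lt_of_lt_of_le ((div_lt_iff₀' hc0).mp hω) (le_max_left _ _)
  have hsub1 : ∀ n, tl (u n / c1) ≤ w n := by
    intro n
    rw [hw n, htldef]
    have h01 : ((0:ℤ) + 1) = 1 := by norm_num
    calc (P {ω | ξ 0 ω > u n / c1}).toReal
        = (P {ω | ξ 1 ω > u n / c1}).toReal := by rw [hident' 1]
      _ ≤ (P {ω | X 0 ω > u n}).toReal := by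
          refine ENNReal.toReal_mono (measure_ne_top P _) (measure_mono ?_)
          intro ω hω
          simp only [Set.mem_setOf_eq] at hω ⊢
          rw [hX 0 ω]
          have : u n < c1 * ξ (0 + 1) ω := by
            rw [h01]; exact (div_lt_iff₀' hc1).mp hω
          exact lt_of_lt_of_le this (le_max_right _ _)
  set Q : ℕ → ℝ := fun n => tl (u n / max c0 c1) with hQdef
  have hQw : ∀ n, Q n ≤ w n := by
    intro n
    rcases max_choice c0 c1 with hmc | hmc
    · simpa only [hQdef, hmc] using hsub0 n
    · simpa only [hQdef, hmc] using hsub1 n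
  have hQpos : ∀ n, 0 < Q n := fun n => htl_pos _
  have hwpos : ∀ n, 0 < w n := fun n => lt_of_lt_of_le (hQpos n) (hQw n)
  -- block probability formula
  have hblock : ∀ (T : ℝ) (a : ℤ) (L : ℕ), 1 ≤ L →
      (P {ω | ∃ i : ℤ, a + 1 ≤ i ∧ i ≤ a + L ∧ X i ω > T}).toReal
        = 1 - (1 - tl (T / c0)) * (1 - tl (T / c1)) * (1 - tl (T / max c0 c1)) ^ (L - 1) := by
    intro T a L hL
    rw [block_prob P ξ hmeas hindep hident hnonneg c0 c1 hc0 hc1 X hX T a L hL,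
      hpsi, hpsi, hpsi]
  set an : ℕ → ℝ := fun n => (1 - tl (u n / c0)) * (1 - tl (u n / c1)) with handef
  -- w in terms of the CDFs
  have hwn : ∀ n, w n = 1 - an n := by
    intro n
    have hset : {ω | X 0 ω > u n}
        = {ω | ∃ i : ℤ, (-1 : ℤ) + 1 ≤ i ∧ i ≤ (-1 : ℤ) + ((1:ℕ) : ℤ) ∧ X i ω > u n} := by
      ext ω
      simp only [Set.mem_setOf_eq]
      constructor
      · intro h; exact ⟨0, by omega, by omega, h⟩
      · rintro ⟨i, h1, h2, h3⟩
        have : i = 0 := by omega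
        subst this; exact h3
    rw [hw n, hset, hblock (u n) (-1) 1 le_rfl]
    simp [handef]
  -- the three block probabilities
  have hA1 : ∀ n, (P (A n 1)).toReal
      = 1 - an n * (1 - Q n) ^ (r n - 1) := by
    intro n
    have hset : A n 1 = {ω | ∃ i : ℤ, (0:ℤ) + 1 ≤ i ∧ i ≤ (0:ℤ) + ((r n : ℕ) : ℤ) ∧ X i ω > u n} := by
      rw [hA]
      ext ω
      simp only [Set.mem_setOf_eq]
      constructor
      · rintro ⟨i, h1, h2, h3⟩; exact ⟨i, by omega, by omega, h3⟩
      · rintro ⟨i, h1, h2, h3⟩; exact ⟨i, by omega, by omega, h3⟩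
    rw [hset, hblock (u n) 0 (r n) (hrpos n), handef]
  have hA2 : ∀ n, (P (A n 2)).toReal
      = 1 - an n * (1 - Q n) ^ (r n - 1) := by
    intro n
    have hset : A n 2 = {ω | ∃ i : ℤ, ((r n : ℕ) : ℤ) + 1 ≤ i ∧ i ≤ ((r n : ℕ) : ℤ) + ((r n : ℕ) : ℤ) ∧ X i ω > u n} := by
      rw [hA]
      ext ω
      simp only [Set.mem_setOf_eq]
      constructor
      · rintro ⟨i, h1, h2, h3⟩; exact ⟨i, by omega, by omega, h3⟩
      · rintro ⟨i, h1, h2, h3⟩; exact ⟨i, by omega, by omega, h3⟩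
    rw [hset, hblock (u n) (r n) (r n) (hrpos n), handef]
  have hA12 : ∀ n, (P (A n 1 ∪ A n 2)).toReal
      = 1 - an n * (1 - Q n) ^ (2 * r n - 1) := by
    intro n
    have hset : A n 1 ∪ A n 2
        = {ω | ∃ i : ℤ, (0:ℤ) + 1 ≤ i ∧ i ≤ (0:ℤ) + ((2 * r n : ℕ) : ℤ) ∧ X i ω > u n} := by
      rw [hA, hA]
      ext ω
      simp only [Set.mem_union, Set.mem_setOf_eq]
      constructor
      · rintro (⟨i, h1, h2, h3⟩ | ⟨i, h1, h2, h3⟩) <;> exact ⟨i, by omega, by omega, h3⟩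
      · rintro ⟨i, h1, h2, h3⟩
        by_cases hi : i ≤ ((r n : ℕ) : ℤ)
        · left; exact ⟨i, by omega, by omega, h3⟩
        · right; exact ⟨i, by omega, by omega, h3⟩
    rw [hset, hblock (u n) 0 (2 * r n) (by have := hrpos n; omega), handef]
  -- measurability and inclusion-exclusion
  have hXmeas : ∀ i, Measurable (X i) := by
    intro i
    have : X i = fun ω => max (c0 * ξ i ω) (c1 * ξ (i + 1) ω) := funext (hX i)
    rw [this]
    exact (measurable_const.mul (hmeas i)).max (measurable_const.mul (hmeas (i + 1)))
  have hAmeas : ∀ n (j : ℤ), MeasurableSet (A n j) := by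
    intro n j
    rw [hA]
    have : {ω | ∃ i : ℤ, (j - 1) * (r n : ℤ) + 1 ≤ i ∧ i ≤ j * (r n : ℤ) ∧ X i ω > u n}
        = ⋃ (i : ℤ), ⋃ (_ : (j - 1) * (r n : ℤ) + 1 ≤ i ∧ i ≤ j * (r n : ℤ)), {ω | X i ω > u n} := by
      ext ω
      simp only [Set.mem_setOf_eq, Set.mem_iUnion]
      constructor
      · rintro ⟨i, h1, h2, h3⟩; exact ⟨i, ⟨h1, h2⟩, h3⟩
      · rintro ⟨i, ⟨h1, h2⟩, h3⟩; exact ⟨i, h1, h2, h3⟩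
    rw [this]
    exact MeasurableSet.iUnion fun i => MeasurableSet.iUnion fun _ =>
      measurableSet_lt measurable_const (hXmeas i)
  have hcap : ∀ n, (P (A n 1 ∩ A n 2)).toReal
      = 2 * (1 - an n * (1 - Q n) ^ (r n - 1)) - (1 - an n * (1 - Q n) ^ (2 * r n - 1)) := by
    intro n
    have h := measure_union_add_inter (μ := P) (A n 1) (hAmeas n 2)
    have h' := congrArg ENNReal.toReal h
    rw [ENNReal.toReal_add (measure_ne_top P _) (measure_ne_top P _),
      ENNReal.toReal_add (measure_ne_top P _) (measure_ne_top P _)] at h'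
    rw [hA1 n, hA2 n, hA12 n] at h'
    linarith
  -- limits
  have hw0 : Tendsto w atTop (nhds 0) := by
    have h1 : Tendsto (fun n => ((r n : ℝ) * w n) * ((r n : ℝ))⁻¹) atTop (nhds (0 * 0)) :=
      hrw.mul hr.inv_tendsto_atTop
    rw [mul_zero] at h1
    refine h1.congr fun n => ?_
    have hrne : ((r n : ℝ)) ≠ 0 := by
      have := hrpos n
      positivity
    field_simp
  have hwle1 : ∀ n, w n ≤ 1 := by
    intro n
    rw [hw n]
    exact ENNReal.toReal_le_of_le_ofReal one_pos.le (by simpa using prob_le_one)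
  have hQ0 : Tendsto Q atTop (nhds 0) :=
    squeeze_zero (fun n => (hQpos n).le) hQw hw0
  have hPn_pos : ∀ n, 0 < tl (u n) := fun n => htl_pos _
  have hRV' : ∀ t : ℝ, 0 < t →
      Tendsto (fun n => tl (t * u n) / tl (u n)) atTop (nhds (t ^ (-α))) := by
    intro t ht
    exact (hRV t ht).comp hu
  have hrpow : ∀ c : ℝ, 0 < c →
      Tendsto (fun n => tl (u n / c) / tl (u n)) atTop (nhds (c ^ α)) := by
    intro c hcpos
    have h := hRV' c⁻¹ (inv_pos.mpr hcpos)
    have hval : (c⁻¹ : ℝ) ^ (-α) = c ^ α := by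
      rw [Real.inv_rpow hcpos.le, Real.rpow_neg hcpos.le, inv_inv]
    rw [hval] at h
    exact h.congr fun n => by rw [inv_mul_eq_div]
  have hP1_0 : Tendsto (fun n => tl (u n / c1)) atTop (nhds 0) :=
    squeeze_zero (fun n => htl_nonneg _) hsub1 hw0
  have hwp : Tendsto (fun n => w n / tl (u n)) atTop (nhds (c0 ^ α + c1 ^ α)) := by
    have h := ((hrpow c0 hc0).add (hrpow c1 hc1)).sub ((hrpow c0 hc0).mul hP1_0)
    rw [mul_zero, sub_zero] at h
    refine h.congr fun n => ?_
    have hpn : tl (u n) ≠ 0 := (hPn_pos n).ne'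
    have hwexp : w n = tl (u n / c0) + tl (u n / c1) - tl (u n / c0) * tl (u n / c1) := by
      have := hwn n
      simp only [handef] at this
      linarith [this]
    rw [hwexp]
    field_simp
  have hD : (0:ℝ) < c0 ^ α + c1 ^ α := by
    have := Real.rpow_pos_of_pos hc0 α
    have := Real.rpow_pos_of_pos hc1 α
    linarith
  have hqwθ : Tendsto (fun n => Q n / w n) atTop (nhds θ) := by
    have h := (hrpow (max c0 c1) hm0).div hwp hD.ne'
    have heq : ∀ n, tl (u n / max c0 c1) / tl (u n) / (w n / tl (u n)) = Q n / w n := by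
      intro n
      rw [div_div_div_cancel_right₀]
      exact (hPn_pos n).ne'
    rw [hθ]
    exact h.congr heq
  have hrq0 : Tendsto (fun n => (r n : ℝ) * Q n) atTop (nhds 0) := by
    refine squeeze_zero (fun n => by positivity) (fun n => ?_) hrw
    exact mul_le_mul_of_nonneg_left (hQw n) (Nat.cast_nonneg _)
  set s : ℕ → ℝ := fun n => 1 - (1 - Q n) ^ (r n) with hsdef
  have hQle1 : ∀ n, Q n ≤ 1 := fun n => le_trans (hQw n) (hwle1 n)
  have hs1 : Tendsto (fun n => s n / ((r n : ℝ) * Q n)) atTop (nhds 1) := by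
    have hub : ∀ n, s n / ((r n : ℝ) * Q n) ≤ 1 := by
      intro n
      have hx : (0:ℝ) < (r n : ℝ) * Q n := by
        have := hrpos n
        have := hQpos n
        positivity
      rw [div_le_one hx]
      have := aux_one_sub_le (Q n) (hQle1 n) (r n)
      simp only [hsdef]
      linarith
    have hlb : ∀ n, 1 - (r n : ℝ) * Q n / 2 ≤ s n / ((r n : ℝ) * Q n) := by
      intro n
      have hx : (0:ℝ) < (r n : ℝ) * Q n := by
        have := hrpos n
        have := hQpos n
        positivity
      rw [le_div_iff₀ hx]
      have := aux_pow_le (Q n) (hQpos n).le (hQle1 n) (r n)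
      simp only [hsdef]
      nlinarith [this]
    have hlow : Tendsto (fun n => 1 - (r n : ℝ) * Q n / 2) atTop (nhds 1) := by
      have h1 : Tendsto (fun _ : ℕ => (1:ℝ)) atTop (nhds 1) := tendsto_const_nhds
      have := h1.sub (hrq0.div_const 2)
      simpa using this
    exact tendsto_of_tendsto_of_tendsto_of_le_of_le hlow tendsto_const_nhds hlb hub
  have hQlt1 : ∀ᶠ n in atTop, Q n < 1 := by
    filter_upwards [hw0.eventually (gt_mem_nhds one_pos)] with n hn
    exact lt_of_le_of_lt (hQw n) hn
  have hinv0 : Tendsto (fun n => ((r n : ℝ) ^ 2 * w n)⁻¹) atTop (nhds 0) :=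
    hlarge.inv_tendsto_atTop
  -- the limit of the explicit expression
  have hG : Tendsto (fun n => ((1 - w n) * ((s n / ((r n : ℝ) * Q n)) * (Q n / w n)) ^ 2
      + (1 - Q n / w n) * ((r n : ℝ) ^ 2 * w n)⁻¹) / (1 - Q n)) atTop (nhds (θ ^ 2)) := by
    have hnum : Tendsto (fun n => (1 - w n) * ((s n / ((r n : ℝ) * Q n)) * (Q n / w n)) ^ 2
        + (1 - Q n / w n) * ((r n : ℝ) ^ 2 * w n)⁻¹) atTop
        (nhds ((1 - 0) * ((1 * θ) ^ 2) + (1 - θ) * 0)) := by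
      exact ((tendsto_const_nhds.sub hw0).mul (((hs1.mul hqwθ)).pow 2)).add
        ((tendsto_const_nhds.sub hqwθ).mul hinv0)
    have hden : Tendsto (fun n => 1 - Q n) atTop (nhds (1 - 0)) :=
      tendsto_const_nhds.sub hQ0
    have h := hnum.div hden (by norm_num)
    have hval : ((1 - 0) * ((1 * θ) ^ 2) + (1 - θ) * 0) / (1 - 0) = θ ^ 2 := by ring
    rwa [hval] at h
  -- identify the two expressions eventually
  refine Tendsto.congr' ?_ hG
  filter_upwards [hQlt1] with n hQ1
  have hgpos : (0:ℝ) < 1 - Q n := by linarith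
  have hR1 : 1 ≤ r n := hrpos n
  have hgR : (1 - Q n) ^ (r n - 1) * (1 - Q n) = 1 - s n := by
    rw [← pow_succ]
    have : r n - 1 + 1 = r n := by omega
    rw [this]
    simp [hsdef]
  have h2R : (1 - Q n) ^ (2 * r n - 1) = (1 - Q n) ^ (r n - 1) * (1 - Q n) ^ (r n) := by
    rw [← pow_add]
    congr 1
    omega
  have hgRn : (1 - Q n) ^ (r n) = 1 - s n := by simp [hsdef]
  have ha : an n = 1 - w n := by linarith [hwn n]
  have hkey : (P (A n 1 ∩ A n 2)).toReal
      = ((1 - w n) * (s n) ^ 2 + (w n - Q n)) / (1 - Q n) := by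
    rw [hcap n, eq_div_iff hgpos.ne', h2R, hgRn, ha]
    linear_combination ((1 - w n) * ((1 - s n) - 2)) * hgR
  rw [hkey]
  have hrne : ((r n : ℝ)) ≠ 0 := by
    have := hrpos n
    positivity
  have hwne : w n ≠ 0 := (hwpos n).ne'
  have hQne : Q n ≠ 0 := (hQpos n).ne'
  field_simp
end

section
/- (Joint cluster length over two adjacent blocks, MMA(1), small blocks.) Fix γ ≥ 0. If in addition r_n^{γ+2} w_n → 0, then lim_{n→∞} (1/w_n) E[(t_2^{last} − t_1^{first})^γ · 1_{A_1 ∩ A_2}] = (min(c_0,c_1))^α / (c_0^α + c_1^α), where t_1^{first} is the first exceedance time in block I_1 and t_2^{last} is the last exceedance time in block I_2. -/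
open MeasureTheory Filter ProbabilityTheory

lemma stmt4_measurable_sInf {Ω : Type*} [MeasurableSpace Ω] (X : ℤ → Ω → ℝ) (hX : ∀ i, Measurable (X i)) (u : ℝ) (lo hi : ℤ) :
    Measurable (fun ω => sInf {i : ℤ | lo ≤ i ∧ i ≤ hi ∧ X i ω > u}) := by
  apply measurable_to_countable'
  intro k
  have hkey : (fun ω => sInf {i : ℤ | lo ≤ i ∧ i ≤ hi ∧ X i ω > u}) ⁻¹' {k}
      = (({ω | lo ≤ k ∧ k ≤ hi ∧ X k ω > u} ∩
            ⋂ i ∈ Finset.Ico lo k, {ω | ¬ (i ≤ hi ∧ X i ω > u)})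
        ∪ ((⋂ i ∈ Finset.Icc lo hi, {ω | ¬ (X i ω > u)}) ∩ {ω | (0:ℤ) = k})) := by
    ext ω
    simp only [Set.mem_preimage, Set.mem_singleton_iff, Set.mem_union, Set.mem_inter_iff,
      Set.mem_setOf_eq, Set.mem_iInter, Finset.mem_Ico, Finset.mem_Icc]
    constructor
    · intro h
      by_cases hne : {i : ℤ | lo ≤ i ∧ i ≤ hi ∧ X i ω > u}.Nonempty
      · left
        have hbdd : BddBelow {i : ℤ | lo ≤ i ∧ i ≤ hi ∧ X i ω > u} :=
          ⟨lo, fun x hx => hx.1⟩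
        have hmem := Int.csInf_mem hne hbdd
        rw [h] at hmem
        refine ⟨hmem, ?_⟩
        rintro i ⟨hlo, hik⟩ ⟨hih, hXi⟩
        have := csInf_le hbdd (show i ∈ {i : ℤ | lo ≤ i ∧ i ≤ hi ∧ X i ω > u} from ⟨hlo, hih, hXi⟩)
        omega
      · right
        rw [Set.not_nonempty_iff_eq_empty] at hne
        refine ⟨?_, ?_⟩
        · intro i hi' hXi
          exact (Set.eq_empty_iff_forall_notMem.1 hne i) ⟨hi'.1, hi'.2, hXi⟩
        · rw [hne] at h; simpa using h
    · rintro (⟨hmem, hleast⟩ | ⟨h, hk⟩)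
      · have : IsLeast {i : ℤ | lo ≤ i ∧ i ≤ hi ∧ X i ω > u} k := by
          refine ⟨hmem, ?_⟩
          rintro x ⟨h1, h2, h3⟩
          by_contra hc
          exact hleast x ⟨h1, by omega⟩ ⟨h2, h3⟩
        exact this.csInf_eq
      · have hne : {i : ℤ | lo ≤ i ∧ i ≤ hi ∧ X i ω > u} = ∅ := by
          ext i
          simp only [Set.mem_setOf_eq, Set.mem_empty_iff_false, iff_false]
          rintro ⟨h1, h2, h3⟩
          exact h i ⟨h1, h2⟩ h3
        rw [hne]
        simpa using hk
  rw [hkey]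
  apply MeasurableSet.union
  · exact (((MeasurableSet.const _).inter ((MeasurableSet.const _).inter
      (measurableSet_lt measurable_const (hX k)))).inter
      (Finset.measurableSet_biInter _ (fun i _ =>
        ((MeasurableSet.const _).inter (measurableSet_lt measurable_const (hX i))).compl)))
  · exact (Finset.measurableSet_biInter _ (fun i _ =>
      (measurableSet_lt measurable_const (hX i)).compl)).inter (MeasurableSet.const _)

lemma stmt4_measurable_sSup {Ω : Type*} [MeasurableSpace Ω]
    (X : ℤ → Ω → ℝ) (hX : ∀ i, Measurable (X i)) (u : ℝ) (lo hi : ℤ) :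
    Measurable (fun ω => sSup {i : ℤ | lo ≤ i ∧ i ≤ hi ∧ X i ω > u}) := by
  apply measurable_to_countable'
  intro k
  have hkey : (fun ω => sSup {i : ℤ | lo ≤ i ∧ i ≤ hi ∧ X i ω > u}) ⁻¹' {k}
      = (({ω | lo ≤ k ∧ k ≤ hi ∧ X k ω > u} ∩
            ⋂ i ∈ Finset.Ioc k hi, {ω | ¬ (lo ≤ i ∧ X i ω > u)})
        ∪ ((⋂ i ∈ Finset.Icc lo hi, {ω | ¬ (X i ω > u)}) ∩ {ω | (0:ℤ) = k})) := by
    ext ω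
    simp only [Set.mem_preimage, Set.mem_singleton_iff, Set.mem_union, Set.mem_inter_iff,
      Set.mem_setOf_eq, Set.mem_iInter, Finset.mem_Ioc, Finset.mem_Icc]
    constructor
    · intro h
      by_cases hne : {i : ℤ | lo ≤ i ∧ i ≤ hi ∧ X i ω > u}.Nonempty
      · left
        have hbdd : BddAbove {i : ℤ | lo ≤ i ∧ i ≤ hi ∧ X i ω > u} :=
          ⟨hi, fun x hx => hx.2.1⟩
        have hmem := Int.csSup_mem hne hbdd
        rw [h] at hmem
        refine ⟨hmem, ?_⟩
        rintro i ⟨hki, hih⟩ ⟨hlo, hXi⟩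
        have := le_csSup hbdd (show i ∈ {i : ℤ | lo ≤ i ∧ i ≤ hi ∧ X i ω > u} from ⟨hlo, hih, hXi⟩)
        omega
      · right
        rw [Set.not_nonempty_iff_eq_empty] at hne
        refine ⟨?_, ?_⟩
        · intro i hi' hXi
          exact (Set.eq_empty_iff_forall_notMem.1 hne i) ⟨hi'.1, hi'.2, hXi⟩
        · rw [hne] at h; simpa using h
    · rintro (⟨hmem, hgr⟩ | ⟨h, hk⟩)
      · have : IsGreatest {i : ℤ | lo ≤ i ∧ i ≤ hi ∧ X i ω > u} k := by
          refine ⟨hmem, ?_⟩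
          rintro x ⟨h1, h2, h3⟩
          by_contra hc
          exact hgr x ⟨by omega, h2⟩ ⟨h1, h3⟩
        exact this.csSup_eq
      · have hne : {i : ℤ | lo ≤ i ∧ i ≤ hi ∧ X i ω > u} = ∅ := by
          ext i
          simp only [Set.mem_setOf_eq, Set.mem_empty_iff_false, iff_false]
          rintro ⟨h1, h2, h3⟩
          exact h i ⟨h1, h2⟩ h3
        rw [hne]
        simpa using hk
  rw [hkey]
  apply MeasurableSet.union
  · exact (((MeasurableSet.const _).inter ((MeasurableSet.const _).inter
      (measurableSet_lt measurable_const (hX k)))).inter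
      (Finset.measurableSet_biInter _ (fun i _ =>
        ((MeasurableSet.const _).inter (measurableSet_lt measurable_const (hX i))).compl)))
  · exact (Finset.measurableSet_biInter _ (fun i _ =>
      (measurableSet_lt measurable_const (hX i)).compl)).inter (MeasurableSet.const _)


lemma stmt4_union4 {Ω : Type*} [MeasurableSpace Ω] (P : Measure Ω) [IsProbabilityMeasure P]
    (s1 s2 s3 s4 : Set Ω) (b : ℝ)
    (h1 : (P s1).toReal ≤ b) (h2 : (P s2).toReal ≤ b)
    (h3 : (P s3).toReal ≤ b) (h4 : (P s4).toReal ≤ b) :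
    (P (s1 ∪ s2 ∪ s3 ∪ s4)).toReal ≤ 4 * b := by
  have htru : ∀ s t : Set Ω, (P (s ∪ t)).toReal ≤ (P s).toReal + (P t).toReal := by
    intro s t
    calc (P (s ∪ t)).toReal ≤ (P s + P t).toReal :=
          ENNReal.toReal_mono
            (ENNReal.add_ne_top.mpr ⟨measure_ne_top _ _, measure_ne_top _ _⟩)
            (measure_union_le s t)
      _ = (P s).toReal + (P t).toReal :=
          ENNReal.toReal_add (measure_ne_top _ _) (measure_ne_top _ _)
  have u1 := htru (s1 ∪ s2 ∪ s3) s4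
  have u2 := htru (s1 ∪ s2) s3
  have u3 := htru s1 s2
  linarith

set_option maxHeartbeats 1000000

/-- Joint cluster length over two adjacent blocks, MMA(1), small blocks:
if `r_n^{γ+2} w_n → 0`, then
`lim (1/w_n) E[(t₂ᶫᵃˢᵗ − t₁ᶠⁱʳˢᵗ)^γ 1_{A₁∩A₂}] = (min c₀ c₁)^α / (c₀^α + c₁^α)`. -/
theorem stmt_4
    {Ω : Type*} [MeasurableSpace Ω] (P : Measure Ω) [IsProbabilityMeasure P]
    (ξ : ℤ → Ω → ℝ) (hmeas : ∀ j, Measurable (ξ j))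
    (hindep : iIndepFun ξ P)
    (hident : ∀ j, Measure.map (ξ j) P = Measure.map (ξ 0) P)
    (hnonneg : ∀ j ω, 0 ≤ ξ j ω)
    (hpos : ∀ x : ℝ, 0 < P {ω | ξ 0 ω > x})
    (α : ℝ) (hα : 0 < α)
    (hRV : ∀ t : ℝ, 0 < t →
      Tendsto (fun x : ℝ => (P {ω | ξ 0 ω > t * x}).toReal / (P {ω | ξ 0 ω > x}).toReal)
        atTop (nhds (t ^ (-α))))
    (c0 c1 : ℝ) (hc0 : 0 < c0) (hc1 : 0 < c1)
    (X : ℤ → Ω → ℝ) (hX : ∀ j ω, X j ω = max (c0 * ξ j ω) (c1 * ξ (j + 1) ω))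
    (u : ℕ → ℝ) (hu : Tendsto u atTop atTop)
    (w : ℕ → ℝ) (hw : ∀ n, w n = (P {ω | X 0 ω > u n}).toReal)
    (r : ℕ → ℕ) (hrpos : ∀ n, 0 < r n)
    (hr : Tendsto (fun n => (r n : ℝ)) atTop atTop)
    (hrw : Tendsto (fun n => (r n : ℝ) * w n) atTop (nhds 0))
    (A : ℕ → ℤ → Set Ω)
    (hA : ∀ n (j : ℤ), A n j =
      {ω | ∃ i : ℤ, (j - 1) * (r n : ℤ) + 1 ≤ i ∧ i ≤ j * (r n : ℤ) ∧ X i ω > u n})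
    (tfirst tlast : ℕ → ℤ → Ω → ℤ)
    (htfirst : ∀ n (j : ℤ) ω, tfirst n j ω =
      sInf {i : ℤ | (j - 1) * (r n : ℤ) + 1 ≤ i ∧ i ≤ j * (r n : ℤ) ∧ X i ω > u n})
    (htlast : ∀ n (j : ℤ) ω, tlast n j ω =
      sSup {i : ℤ | (j - 1) * (r n : ℤ) + 1 ≤ i ∧ i ≤ j * (r n : ℤ) ∧ X i ω > u n})
    (γ : ℝ) (hγ : 0 ≤ γ)
    (hsmall : Tendsto (fun n => (r n : ℝ) ^ (γ + 2) * w n) atTop (nhds 0)) :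
    Tendsto (fun n => (1 / w n) *
        ∫ ω in (A n 1 ∩ A n 2), ((tlast n 2 ω - tfirst n 1 ω : ℤ) : ℝ) ^ γ ∂P)
      atTop (nhds ((min c0 c1) ^ α / (c0 ^ α + c1 ^ α))) := by
  classical
  set m : ℝ := min c0 c1 with hm
  have hmpos : 0 < m := lt_min hc0 hc1
  set F : ℝ → ℝ := fun x => (P {ω | ξ 0 ω > x}).toReal with hFdef
  -- measurability
  have hXmeas : ∀ i : ℤ, Measurable (X i) := by
    intro i
    have h : X i = fun ω => max (c0 * ξ i ω) (c1 * ξ (i + 1) ω) := funext (hX i)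
    rw [h]
    exact (measurable_const.mul (hmeas i)).max (measurable_const.mul (hmeas (i + 1)))
  have hXset : ∀ (i : ℤ) (v : ℝ), MeasurableSet {ω | X i ω > v} := fun i v =>
    measurableSet_lt measurable_const (hXmeas i)
  have hξset : ∀ (i : ℤ) (v : ℝ), MeasurableSet {ω | ξ i ω > v} := fun i v =>
    measurableSet_lt measurable_const (hmeas i)
  -- identical one-dimensional laws
  have hlaw : ∀ (j : ℤ) (x : ℝ), P {ω | ξ j ω > x} = P {ω | ξ 0 ω > x} := by
    intro j x
    have h1 : {ω | ξ j ω > x} = ξ j ⁻¹' Set.Ioi x := rfl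
    have h2 : {ω | ξ 0 ω > x} = ξ 0 ⁻¹' Set.Ioi x := rfl
    rw [h1, h2, ← Measure.map_apply (hmeas j) measurableSet_Ioi,
      ← Measure.map_apply (hmeas 0) measurableSet_Ioi, hident j]
  -- pairwise independence
  have hprod : ∀ (i j : ℤ), i ≠ j → ∀ x y : ℝ,
      P ({ω | ξ i ω > x} ∩ {ω | ξ j ω > y}) = P {ω | ξ i ω > x} * P {ω | ξ j ω > y} := by
    intro i j hij x y
    exact (hindep.indepFun hij).measure_inter_preimage_eq_mul
      (Set.Ioi x) (Set.Ioi y) measurableSet_Ioi measurableSet_Ioi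
  -- splitting of the exceedance events
  have hXsplit : ∀ (i : ℤ) (v : ℝ),
      {ω | X i ω > v} = {ω | ξ i ω > v / c0} ∪ {ω | ξ (i + 1) ω > v / c1} := by
    intro i v
    ext ω
    simp only [Set.mem_setOf_eq, Set.mem_union, hX i ω, gt_iff_lt, lt_max_iff,
      div_lt_iff₀ hc0, div_lt_iff₀ hc1]
    constructor
    · rintro (h | h)
      · exact Or.inl (by linarith [mul_comm c0 (ξ i ω)])
      · exact Or.inr (by linarith [mul_comm c1 (ξ (i + 1) ω)])
    · rintro (h | h)
      · exact Or.inl (by linarith [mul_comm (ξ i ω) c0])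
      · exact Or.inr (by linarith [mul_comm (ξ (i + 1) ω) c1])
  -- the inclusion-exclusion identity
  have hkey : ∀ (v : ℝ) (k : ℤ),
      P {ω | X k ω > v} + P {ω | ξ 0 ω > v / c0} * P {ω | ξ 0 ω > v / c1}
        = P {ω | ξ 0 ω > v / c0} + P {ω | ξ 0 ω > v / c1} := by
    intro v k
    rw [hXsplit k v]
    have h := measure_union_add_inter (μ := P) {ω | ξ k ω > v / c0} (hξset (k + 1) (v / c1))
    rw [hprod k (k + 1) (by omega) _ _, hlaw k, hlaw (k + 1)] at h
    exact h
  have hfin : P {ω | ξ 0 ω > (u 0) / c0} ≠ ⊤ := measure_ne_top _ _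
  -- stationarity
  have hstat : ∀ (v : ℝ) (k : ℤ), P {ω | X k ω > v} = P {ω | X 0 ω > v} := by
    intro v k
    exact WithTop.add_right_cancel
      (ENNReal.mul_ne_top (measure_ne_top _ _) (measure_ne_top _ _))
      ((hkey v k).trans (hkey v 0).symm)
  -- real-valued inclusion-exclusion
  have hwab : ∀ n, w n + F (u n / c0) * F (u n / c1) = F (u n / c0) + F (u n / c1) := by
    intro n
    have h := hkey (u n) 0
    have := congrArg ENNReal.toReal h
    rw [ENNReal.toReal_add (measure_ne_top _ _)
        (ENNReal.mul_ne_top (measure_ne_top _ _) (measure_ne_top _ _)),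
      ENNReal.toReal_add (measure_ne_top _ _) (measure_ne_top _ _),
      ENNReal.toReal_mul] at this
    rw [hw n]
    exact this
  have hFpos : ∀ x, 0 < F x := fun x =>
    ENNReal.toReal_pos (hpos x).ne' (measure_ne_top _ _)
  have hFle1 : ∀ x, F x ≤ 1 := by
    intro x
    rw [hFdef]
    exact ENNReal.toReal_le_of_le_ofReal one_pos.le (by simpa using prob_le_one)
  have hwpos : ∀ n, 0 < w n := by
    intro n
    have h := hwab n
    have h1 := hFpos (u n / c0)
    have h2 := hFpos (u n / c1)
    have h3 := hFle1 (u n / c0)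
    nlinarith
  -- F tends to 0 at infinity
  have hFanti : Antitone F := by
    intro x y hxy
    exact ENNReal.toReal_mono (measure_ne_top _ _)
      (measure_mono (fun ω hω => lt_of_le_of_lt hxy hω))
  have hFnat : Tendsto (fun k : ℕ => F k) atTop (nhds 0) := by
    have h1 : Tendsto (fun k : ℕ => P {ω | ξ 0 ω > (k : ℝ)}) atTop
        (nhds (P (⋂ k : ℕ, {ω | ξ 0 ω > (k : ℝ)}))) := by
      apply tendsto_measure_iInter_atTop
      · exact fun k => (hξset 0 k).nullMeasurableSet
      · intro a b hab
        exact fun ω hω => lt_of_le_of_lt (show ((a:ℝ)) ≤ b from Nat.cast_le.mpr hab) hω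
      · exact ⟨0, measure_ne_top _ _⟩
    have h2 : (⋂ k : ℕ, {ω | ξ 0 ω > (k : ℝ)}) = ∅ := by
      ext ω
      simp only [Set.mem_iInter, Set.mem_setOf_eq, Set.mem_empty_iff_false, iff_false, not_forall]
      obtain ⟨k, hk⟩ := exists_nat_gt (ξ 0 ω)
      exact ⟨k, by simp [not_lt.2 hk.le]⟩
    rw [h2, measure_empty] at h1
    have := (ENNReal.tendsto_toReal (by simp)).comp h1
    rw [ENNReal.toReal_zero] at this
    exact this
  have hF0 : Tendsto F atTop (nhds 0) := by
    rw [Metric.tendsto_atTop] at hFnat ⊢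
    intro ε hε
    obtain ⟨N, hN⟩ := hFnat ε hε
    refine ⟨N, fun x hx => ?_⟩
    have h1 : F x ≤ F N := hFanti hx
    have h2 := hN N le_rfl
    rw [Real.dist_eq, sub_zero, abs_of_nonneg (hFpos _).le] at h2
    rw [Real.dist_eq, sub_zero, abs_of_nonneg (hFpos _).le]
    linarith
  have hFu0 : Tendsto (fun n => F (u n)) atTop (nhds 0) := hF0.comp hu
  -- regular variation along u
  have hRVu : ∀ t : ℝ, 0 < t →
      Tendsto (fun n => F (t * u n) / F (u n)) atTop (nhds (t ^ (-α))) := fun t ht =>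
    (hRV t ht).comp hu
  have hratio : ∀ c : ℝ, 0 < c →
      Tendsto (fun n => F (u n / c) / F (u n)) atTop (nhds (c ^ α)) := by
    intro c hc
    have h := hRVu (1 / c) (by positivity)
    have he : ∀ n, F (1 / c * u n) = F (u n / c) := by
      intro n; rw [one_div_mul_eq_div]
    have hval : (1 / c) ^ (-α) = c ^ α := by
      rw [one_div, Real.inv_rpow hc.le, Real.rpow_neg hc.le, inv_inv]
    simpa only [he, hval] using h
  have ha := hratio c0 hc0
  have hb := hratio c1 hc1
  have hmr := hratio m hmpos
  -- b n → 0
  have hb0 : Tendsto (fun n => F (u n / c1)) atTop (nhds 0) := by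
    have h := hb.mul hFu0
    rw [mul_zero] at h
    exact h.congr (fun n => div_mul_cancel₀ _ (hFpos (u n)).ne')
  -- w / F(u) → c0^α + c1^α
  have hwF : Tendsto (fun n => w n / F (u n)) atTop (nhds (c0 ^ α + c1 ^ α)) := by
    have h : ∀ n, w n / F (u n)
        = F (u n / c0) / F (u n) + F (u n / c1) / F (u n) - F (u n / c0) / F (u n) * F (u n / c1) := by
      intro n
      have hF := (hFpos (u n)).ne'
      have := hwab n
      field_simp
      linarith [hwab n]
    rw [funext h]
    have := (ha.add hb).sub (ha.mul hb0)
    simpa using this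
  have hsum_pos : 0 < c0 ^ α + c1 ^ α := by positivity
  -- main term limit
  have hMain : Tendsto (fun n => F (u n / m) / w n) atTop
      (nhds (m ^ α / (c0 ^ α + c1 ^ α))) := by
    have h : ∀ n, F (u n / m) / w n = F (u n / m) / F (u n) * (w n / F (u n))⁻¹ := by
      intro n
      have h1 := (hFpos (u n)).ne'
      have h2 := (hwpos n).ne'
      field_simp
    rw [funext h]
    have := hmr.mul (hwF.inv₀ hsum_pos.ne')
    rw [div_eq_mul_inv]
    exact this
  -- the error bound
  have hband : ∀ᶠ n in atTop, |(1 / w n) *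
      (∫ ω in (A n 1 ∩ A n 2), ((tlast n 2 ω - tfirst n 1 ω : ℤ) : ℝ) ^ γ ∂P)
      - F (u n / m) / w n| ≤ (2 : ℝ) ^ (γ + 4) * ((r n : ℝ) ^ (γ + 2) * w n) := by
    filter_upwards [hu.eventually_gt_atTop 0] with n hun
    set v : ℝ := u n with hv
    set rz : ℤ := (r n : ℤ) with hrz
    set R : ℝ := (r n : ℝ) with hRdef
    have hrz1 : 1 ≤ rz := by
      have := hrpos n
      omega
    have hR1 : (1 : ℝ) ≤ R := by
      rw [hRdef]
      exact_mod_cast hrpos n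
    have hRpos : (0 : ℝ) < R := by linarith
    have hRzR : ((rz : ℝ)) = R := by rw [hrz, hRdef]; push_cast; ring
    have e1 : ((1 : ℤ) - 1) * rz + 1 = 1 := by ring
    have e2 : (1 : ℤ) * rz = rz := one_mul rz
    have e3 : ((2 : ℤ) - 1) * rz + 1 = rz + 1 := by ring
    have e4 : (2 : ℤ) * rz = 2 * rz := rfl
    -- clean descriptions of the two blocks
    have hS1 : A n 1 = ⋃ i ∈ Finset.Icc (1 : ℤ) rz, {ω | X i ω > v} := by
      rw [hA n 1]
      ext ω
      simp only [Set.mem_setOf_eq, Set.mem_iUnion, Finset.mem_Icc, exists_prop, ← hrz, e1, e2]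
      constructor
      · rintro ⟨i, h1, h2, h3⟩; exact ⟨i, ⟨h1, h2⟩, h3⟩
      · rintro ⟨i, ⟨h1, h2⟩, h3⟩; exact ⟨i, h1, h2, h3⟩
    have hS2 : A n 2 = ⋃ i ∈ Finset.Icc (rz + 1) (2 * rz), {ω | X i ω > v} := by
      rw [hA n 2]
      ext ω
      simp only [Set.mem_setOf_eq, Set.mem_iUnion, Finset.mem_Icc, exists_prop, ← hrz, e3]
      constructor
      · rintro ⟨i, h1, h2, h3⟩; exact ⟨i, ⟨h1, h2⟩, h3⟩
      · rintro ⟨i, ⟨h1, h2⟩, h3⟩; exact ⟨i, h1, h2, h3⟩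
    have hS1m : MeasurableSet (A n 1) := by
      rw [hS1]; exact Finset.measurableSet_biUnion _ (fun i _ => hXset i v)
    have hS2m : MeasurableSet (A n 2) := by
      rw [hS2]; exact Finset.measurableSet_biUnion _ (fun i _ => hXset i v)
    set S : Set Ω := A n 1 ∩ A n 2 with hSdef
    have hSm : MeasurableSet S := hS1m.inter hS2m
    -- clean descriptions of tfirst / tlast
    have ht1 : ∀ ω, tfirst n 1 ω = sInf {i : ℤ | 1 ≤ i ∧ i ≤ rz ∧ X i ω > v} := by
      intro ω
      rw [htfirst n 1 ω]
      congr 1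
      ext i
      simp only [Set.mem_setOf_eq, ← hrz, ← hv, e1, e2]
    have ht2 : ∀ ω, tlast n 2 ω = sSup {i : ℤ | rz + 1 ≤ i ∧ i ≤ 2 * rz ∧ X i ω > v} := by
      intro ω
      rw [htlast n 2 ω]
      congr 1
      ext i
      simp only [Set.mem_setOf_eq, ← hrz, ← hv, e3]
    set f : Ω → ℝ := fun ω => ((tlast n 2 ω - tfirst n 1 ω : ℤ) : ℝ) ^ γ with hfdef
    -- membership of tfirst/tlast in the exceedance sets
    have hfirst_mem : ∀ ω ∈ A n 1,
        tfirst n 1 ω ∈ {i : ℤ | 1 ≤ i ∧ i ≤ rz ∧ X i ω > v} := by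
      intro ω hω
      rw [ht1 ω]
      apply Int.csInf_mem
      · rw [hS1] at hω
        simp only [Set.mem_iUnion, Finset.mem_Icc, exists_prop, Set.mem_setOf_eq] at hω
        obtain ⟨i, ⟨h1, h2⟩, h3⟩ := hω
        exact ⟨i, h1, h2, h3⟩
      · exact ⟨1, fun x hx => hx.1⟩
    have hlast_mem : ∀ ω ∈ A n 2,
        tlast n 2 ω ∈ {i : ℤ | rz + 1 ≤ i ∧ i ≤ 2 * rz ∧ X i ω > v} := by
      intro ω hω
      rw [ht2 ω]
      apply Int.csSup_mem
      · rw [hS2] at hω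
        simp only [Set.mem_iUnion, Finset.mem_Icc, exists_prop, Set.mem_setOf_eq] at hω
        obtain ⟨i, ⟨h1, h2⟩, h3⟩ := hω
        exact ⟨i, h1, h2, h3⟩
      · exact ⟨2 * rz, fun x hx => hx.2.1⟩
    -- bounds for f on S
    have hfb : ∀ ω ∈ S, 1 ≤ f ω ∧ f ω ≤ (2 * R) ^ γ := by
      intro ω hω
      obtain ⟨h11, h12, _⟩ := hfirst_mem ω hω.1
      obtain ⟨h21, h22, _⟩ := hlast_mem ω hω.2
      have hbase1 : (1 : ℝ) ≤ ((tlast n 2 ω - tfirst n 1 ω : ℤ) : ℝ) := by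
        have : (1 : ℤ) ≤ tlast n 2 ω - tfirst n 1 ω := by omega
        exact_mod_cast this
      have hbase2 : ((tlast n 2 ω - tfirst n 1 ω : ℤ) : ℝ) ≤ 2 * R := by
        have h : tlast n 2 ω - tfirst n 1 ω ≤ 2 * rz := by omega
        calc ((tlast n 2 ω - tfirst n 1 ω : ℤ) : ℝ) ≤ ((2 * rz : ℤ) : ℝ) := by exact_mod_cast h
          _ = 2 * R := by rw [← hRzR]; push_cast; ring
      exact ⟨Real.one_le_rpow hbase1 hγ, Real.rpow_le_rpow (by linarith) hbase2 hγ⟩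
    -- the central event
    set Bset : Set Ω := {ω | ξ (rz + 1) ω > v / m} with hBdef
    have hBm : MeasurableSet Bset := hξset (rz + 1) (v / m)
    have hvc1 : v / c1 ≤ v / m := by
      rw [div_le_div_iff₀ hc1 hmpos]
      have := min_le_right c0 c1
      nlinarith
    have hvc0 : v / c0 ≤ v / m := by
      rw [div_le_div_iff₀ hc0 hmpos]
      have := min_le_left c0 c1
      nlinarith
    have hBXr : Bset ⊆ {ω | X rz ω > v} := by
      intro ω hω
      simp only [hBdef, Set.mem_setOf_eq] at hω
      rw [hXsplit rz v]
      right
      simp only [Set.mem_setOf_eq]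
      linarith
    have hBXr1 : Bset ⊆ {ω | X (rz + 1) ω > v} := by
      intro ω hω
      simp only [hBdef, Set.mem_setOf_eq] at hω
      rw [hXsplit (rz + 1) v]
      left
      simp only [Set.mem_setOf_eq]
      linarith
    have hBS : Bset ⊆ S := by
      intro ω hω
      constructor
      · rw [hS1]
        simp only [Set.mem_iUnion, Finset.mem_Icc, exists_prop]
        exact ⟨rz, ⟨hrz1, le_refl rz⟩, hBXr hω⟩
      · rw [hS2]
        simp only [Set.mem_iUnion, Finset.mem_Icc, exists_prop]
        exact ⟨rz + 1, ⟨le_refl _, by omega⟩, hBXr1 hω⟩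
    -- the "no other exceedance" event
    set J : Finset ℤ := (Finset.Icc 1 (2 * rz)) \ {rz, rz + 1} with hJdef
    set D : Set Ω := ⋃ i ∈ J, {ω | X i ω > v} with hDdef
    have hDm : MeasurableSet D := Finset.measurableSet_biUnion _ (fun i _ => hXset i v)
    set G : Set Ω := Dᶜ with hGdef
    have hGm : MeasurableSet G := hDm.compl
    -- on Bset ∩ G, f = 1
    have hfBG : ∀ ω ∈ Bset ∩ G, f ω = 1 := by
      rintro ω ⟨hωB, hωG⟩
      have hnotD : ∀ i ∈ J, ¬ (X i ω > v) := by
        intro i hi hXi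
        apply hωG
        rw [hDdef]
        simp only [Set.mem_iUnion, exists_prop]
        exact ⟨i, hi, hXi⟩
      have hT1 : {i : ℤ | 1 ≤ i ∧ i ≤ rz ∧ X i ω > v} = {rz} := by
        ext i
        simp only [Set.mem_setOf_eq, Set.mem_singleton_iff]
        constructor
        · rintro ⟨h1, h2, h3⟩
          by_contra hne
          refine hnotD i ?_ h3
          rw [hJdef]
          simp only [Finset.mem_sdiff, Finset.mem_Icc, Finset.mem_insert, Finset.mem_singleton]
          constructor
          · constructor <;> omega
          · push_neg; constructor <;> omega
        · rintro rfl
          exact ⟨hrz1, le_refl _, hBXr hωB⟩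
      have hT2 : {i : ℤ | rz + 1 ≤ i ∧ i ≤ 2 * rz ∧ X i ω > v} = {rz + 1} := by
        ext i
        simp only [Set.mem_setOf_eq, Set.mem_singleton_iff]
        constructor
        · rintro ⟨h1, h2, h3⟩
          by_contra hne
          refine hnotD i ?_ h3
          rw [hJdef]
          simp only [Finset.mem_sdiff, Finset.mem_Icc, Finset.mem_insert, Finset.mem_singleton]
          constructor
          · constructor <;> omega
          · push_neg; constructor <;> omega
        · rintro rfl
          exact ⟨le_refl _, by omega, hBXr1 hωB⟩
      have hv1 : tfirst n 1 ω = rz := by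
        rw [ht1 ω, hT1]
        exact csInf_singleton rz
      have hv2 : tlast n 2 ω = rz + 1 := by
        rw [ht2 ω, hT2]
        exact csSup_singleton (rz + 1)
      rw [hfdef]
      simp only [hv1, hv2]
      norm_num
    -- measurability of f
    have hmf1 : Measurable (tfirst n 1) := by
      have h : tfirst n 1 = fun ω => sInf {i : ℤ | 1 ≤ i ∧ i ≤ rz ∧ X i ω > v} := funext ht1
      rw [h]
      exact stmt4_measurable_sInf X hXmeas v 1 rz
    have hmf2 : Measurable (tlast n 2) := by
      have h : tlast n 2 = fun ω => sSup {i : ℤ | rz + 1 ≤ i ∧ i ≤ 2 * rz ∧ X i ω > v} :=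
        funext ht2
      rw [h]
      exact stmt4_measurable_sSup X hXmeas v (rz + 1) (2 * rz)
    have hfmeas : Measurable f := by
      have hsub : Measurable (fun ω => tlast n 2 ω - tfirst n 1 ω) := hmf2.sub hmf1
      exact (Measurable.of_discrete (f := fun z : ℤ => ((z : ℝ)) ^ γ)).comp hsub
    -- integrability
    have hfint : IntegrableOn f S P := by
      apply Measure.integrableOn_of_bounded (measure_ne_top _ _) hfmeas.aestronglyMeasurable
        (M := (2 * R) ^ γ)
      rw [ae_restrict_iff' hSm]
      refine ae_of_all _ (fun ω hω => ?_)
      rw [Real.norm_eq_abs, abs_of_nonneg (by linarith [(hfb ω hω).1])]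
      exact (hfb ω hω).2
    have hBGm : MeasurableSet (Bset ∩ G) := hBm.inter hGm
    have hBGS : Bset ∩ G ⊆ S := fun ω hω => hBS hω.1
    -- split the integral
    have hIsplit : ∫ ω in S, f ω ∂P
        = (∫ ω in Bset ∩ G, f ω ∂P) + ∫ ω in S \ (Bset ∩ G), f ω ∂P := by
      have h := setIntegral_union (f := f) (μ := P) disjoint_sdiff_self_right
        (hSm.diff hBGm) (hfint.mono_set hBGS) (hfint.mono_set Set.diff_subset)
      rw [Set.union_diff_cancel hBGS] at h
      exact h
    have hI1 : ∫ ω in Bset ∩ G, f ω ∂P = (P (Bset ∩ G)).toReal := by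
      rw [setIntegral_congr_fun hBGm hfBG]
      rw [setIntegral_const, smul_eq_mul, mul_one, measureReal_def]
    -- real-valued measure helpers
    have htr : ∀ s t : Set Ω, s ⊆ t → (P s).toReal ≤ (P t).toReal := fun s t h =>
      ENNReal.toReal_mono (measure_ne_top _ _) (measure_mono h)
    have htru : ∀ s t : Set Ω, (P (s ∪ t)).toReal ≤ (P s).toReal + (P t).toReal := by
      intro s t
      calc (P (s ∪ t)).toReal ≤ (P s + P t).toReal :=
            ENNReal.toReal_mono
              (ENNReal.add_ne_top.mpr ⟨measure_ne_top _ _, measure_ne_top _ _⟩)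
              (measure_union_le s t)
        _ = (P s).toReal + (P t).toReal :=
            ENNReal.toReal_add (measure_ne_top _ _) (measure_ne_top _ _)
    have hw_k : ∀ k : ℤ, (P {ω | X k ω > v}).toReal = w n := by
      intro k
      rw [hstat v k, hw n]
    have hEa : ∀ k : ℤ, (P {ω | ξ k ω > v / c0}).toReal ≤ w n := by
      intro k
      rw [hlaw k (v / c0), ← hw_k 0]
      apply htr
      rw [hXsplit 0 v]
      exact Set.subset_union_left
    have hEb : ∀ k : ℤ, (P {ω | ξ k ω > v / c1}).toReal ≤ w n := by
      intro k
      rw [hlaw k (v / c1)]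
      have h0 : P {ω | ξ 0 ω > v / c1} = P {ω | ξ (0 + 1) ω > v / c1} :=
        (hlaw (0 + 1) (v / c1)).symm
      rw [h0, ← hw_k 0]
      apply htr
      rw [hXsplit 0 v]
      exact Set.subset_union_right
    have hPrB : (P Bset).toReal = F (v / m) := by
      rw [hBdef, hlaw (rz + 1) (v / m)]
    have hPrBw : (P Bset).toReal ≤ w n := by
      rw [← hw_k rz]
      exact htr _ _ hBXr
    have hwnn : 0 ≤ w n := (hwpos n).le
    -- bound 1 : P (Bset \ G) ≤ 4 R w²
    have bound1 : (P (Bset \ G)).toReal ≤ 4 * R * (w n) ^ 2 := by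
      have hBD : Bset \ G = ⋃ i ∈ J, (Bset ∩ {ω | X i ω > v}) := by
        rw [hGdef, Set.diff_compl, hDdef, Set.inter_iUnion₂]
      have hterm : ∀ i ∈ J, (P (Bset ∩ {ω | X i ω > v})).toReal ≤ 2 * (w n * w n) := by
        intro i hi
        have hine : i ≠ rz + 1 ∧ i ≠ rz := by
          rw [hJdef] at hi
          simp only [Finset.mem_sdiff, Finset.mem_Icc, Finset.mem_insert,
            Finset.mem_singleton] at hi
          push_neg at hi
          exact ⟨hi.2.2, hi.2.1⟩
        have hsplit : Bset ∩ {ω | X i ω > v}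
            ⊆ (Bset ∩ {ω | ξ i ω > v / c0}) ∪ (Bset ∩ {ω | ξ (i + 1) ω > v / c1}) := by
          rw [hXsplit i v, Set.inter_union_distrib_left]
        have h1 : P (Bset ∩ {ω | ξ i ω > v / c0})
            = P Bset * P {ω | ξ i ω > v / c0} := by
          rw [hBdef]
          exact hprod (rz + 1) i (by omega) (v / m) (v / c0)
        have h2 : P (Bset ∩ {ω | ξ (i + 1) ω > v / c1})
            = P Bset * P {ω | ξ (i + 1) ω > v / c1} := by
          rw [hBdef]
          exact hprod (rz + 1) (i + 1) (by omega) (v / m) (v / c1)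
        calc (P (Bset ∩ {ω | X i ω > v})).toReal
            ≤ (P ((Bset ∩ {ω | ξ i ω > v / c0}) ∪ (Bset ∩ {ω | ξ (i + 1) ω > v / c1}))).toReal :=
              htr _ _ hsplit
          _ ≤ (P (Bset ∩ {ω | ξ i ω > v / c0})).toReal
              + (P (Bset ∩ {ω | ξ (i + 1) ω > v / c1})).toReal := htru _ _
          _ = (P Bset).toReal * (P {ω | ξ i ω > v / c0}).toReal
              + (P Bset).toReal * (P {ω | ξ (i + 1) ω > v / c1}).toReal := by
              rw [h1, h2, ENNReal.toReal_mul, ENNReal.toReal_mul]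
          _ ≤ w n * w n + w n * w n := by
              refine add_le_add ?_ ?_
              · exact mul_le_mul hPrBw (hEa i) ENNReal.toReal_nonneg hwnn
              · exact mul_le_mul hPrBw (hEb (i + 1)) ENNReal.toReal_nonneg hwnn
          _ = 2 * (w n * w n) := by ring
      have hcard : (J.card : ℝ) ≤ 2 * R := by
        have h1 : J.card ≤ (Finset.Icc (1 : ℤ) (2 * rz)).card :=
          Finset.card_le_card (Finset.sdiff_subset)
        have h2 : (Finset.Icc (1 : ℤ) (2 * rz)).card = (2 * rz + 1 - 1).toNat := Int.card_Icc _ _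
        have h3 : ((2 * rz + 1 - 1 : ℤ)).toNat = 2 * r n := by omega
        have : (J.card : ℝ) ≤ ((2 * r n : ℕ) : ℝ) := by
          exact_mod_cast h1.trans (le_of_eq (h2.trans h3))
        calc (J.card : ℝ) ≤ ((2 * r n : ℕ) : ℝ) := this
          _ = 2 * R := by rw [hRdef]; push_cast; ring
      calc (P (Bset \ G)).toReal
          = (P (⋃ i ∈ J, (Bset ∩ {ω | X i ω > v}))).toReal := by rw [hBD]
        _ ≤ (∑ i ∈ J, P (Bset ∩ {ω | X i ω > v})).toReal :=
            ENNReal.toReal_mono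
              (by
                refine (ENNReal.sum_lt_top.mpr (fun a _ => ?_)).ne
                exact measure_lt_top _ _)
              (measure_biUnion_finset_le J _)
        _ = ∑ i ∈ J, (P (Bset ∩ {ω | X i ω > v})).toReal :=
            ENNReal.toReal_sum (fun a _ => measure_ne_top _ _)
        _ ≤ ∑ _i ∈ J, 2 * (w n * w n) := Finset.sum_le_sum hterm
        _ = (J.card : ℝ) * (2 * (w n * w n)) := by rw [Finset.sum_const, nsmul_eq_mul]
        _ ≤ (2 * R) * (2 * (w n * w n)) := by
            refine mul_le_mul_of_nonneg_right hcard ?_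
            have := mul_nonneg hwnn hwnn
            linarith
        _ = 4 * R * (w n) ^ 2 := by ring
    -- bound 2 : P (S \ Bset) ≤ 4 R² w²
    have bound2 : (P (S \ Bset)).toReal ≤ 4 * R ^ 2 * (w n) ^ 2 := by
      set K1 : Finset ℤ := Finset.Icc (1 : ℤ) rz with hK1
      set K2 : Finset ℤ := Finset.Icc (rz + 1) (2 * rz) with hK2
      have hScover : S \ Bset ⊆ ⋃ i ∈ K1, ⋃ j ∈ K2, (({ω | X i ω > v} ∩ {ω | X j ω > v}) \ Bset) := by
        rintro ω ⟨⟨hω1, hω2⟩, hωB⟩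
        rw [hS1] at hω1
        rw [hS2] at hω2
        simp only [Set.mem_iUnion, exists_prop] at hω1 hω2 ⊢
        obtain ⟨i, hi, hXi⟩ := hω1
        obtain ⟨j, hj, hXj⟩ := hω2
        exact ⟨i, hi, j, hj, ⟨hXi, hXj⟩, hωB⟩
      have hpair : ∀ i ∈ K1, ∀ j ∈ K2,
          (P (({ω | X i ω > v} ∩ {ω | X j ω > v}) \ Bset)).toReal ≤ 4 * (w n * w n) := by
        intro i hi j hj
        rw [hK1, Finset.mem_Icc] at hi
        rw [hK2, Finset.mem_Icc] at hj
        have hprod_le : ∀ (a b : ℤ) (x y : ℝ), a ≠ b →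
            (P {ω | ξ a ω > x}).toReal ≤ w n → (P {ω | ξ b ω > y}).toReal ≤ w n →
            (P ({ω | ξ a ω > x} ∩ {ω | ξ b ω > y})).toReal ≤ w n * w n := by
          intro a b x y hab h1 h2
          rw [hprod a b hab x y, ENNReal.toReal_mul]
          exact mul_le_mul h1 h2 ENNReal.toReal_nonneg hwnn
        have hcover2 : ({ω | X i ω > v} ∩ {ω | X j ω > v}) \ Bset
            ⊆ ({ω | ξ i ω > v / c0} ∩ {ω | ξ j ω > v / c0})
              ∪ ({ω | ξ i ω > v / c0} ∩ {ω | ξ (j + 1) ω > v / c1})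
              ∪ ({ω | ξ (i + 1) ω > v / c1} ∩ {ω | ξ (j + 1) ω > v / c1})
              ∪ (({ω | ξ (i + 1) ω > v / c1} ∩ {ω | ξ j ω > v / c0}) \ Bset) := by
          rintro ω ⟨⟨hXi, hXj⟩, hωB⟩
          rw [hXsplit i v] at hXi
          rw [hXsplit j v] at hXj
          rcases hXi with hxi | hxi <;> rcases hXj with hxj | hxj
          · exact Or.inl (Or.inl (Or.inl ⟨hxi, hxj⟩))
          · exact Or.inl (Or.inl (Or.inr ⟨hxi, hxj⟩))
          · exact Or.inr ⟨⟨hxi, hxj⟩, hωB⟩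
          · exact Or.inl (Or.inr ⟨hxi, hxj⟩)
        have hlastterm : (P (({ω | ξ (i + 1) ω > v / c1} ∩ {ω | ξ j ω > v / c0}) \ Bset)).toReal
            ≤ w n * w n := by
          by_cases hij : i + 1 = j
          · -- then j = rz + 1 and the set is empty
            have hjrz : j = rz + 1 := by omega
            have hempty : ({ω | ξ (i + 1) ω > v / c1} ∩ {ω | ξ j ω > v / c0}) \ Bset = ∅ := by
              rw [Set.eq_empty_iff_forall_notMem]
              rintro ω ⟨⟨hω1, hω2⟩, hωB⟩
              apply hωB
              rw [hBdef]
              simp only [Set.mem_setOf_eq] at hω1 hω2 ⊢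
              rw [hij, hjrz] at hω1
              rw [hjrz] at hω2
              rcases le_total c0 c1 with hcc | hcc
              · rw [hm.trans (min_eq_left hcc)]
                exact hω2
              · rw [hm.trans (min_eq_right hcc)]
                exact hω1
            rw [hempty]
            simp only [measure_empty, ENNReal.toReal_zero]
            exact mul_nonneg hwnn hwnn
          · calc (P (({ω | ξ (i + 1) ω > v / c1} ∩ {ω | ξ j ω > v / c0}) \ Bset)).toReal
                ≤ (P ({ω | ξ (i + 1) ω > v / c1} ∩ {ω | ξ j ω > v / c0})).toReal :=
                  htr _ _ Set.diff_subset
              _ ≤ w n * w n := hprod_le (i + 1) j _ _ (by omega) (hEb (i + 1)) (hEa j)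
        calc (P (({ω | X i ω > v} ∩ {ω | X j ω > v}) \ Bset)).toReal
            ≤ (P (({ω | ξ i ω > v / c0} ∩ {ω | ξ j ω > v / c0})
              ∪ ({ω | ξ i ω > v / c0} ∩ {ω | ξ (j + 1) ω > v / c1})
              ∪ ({ω | ξ (i + 1) ω > v / c1} ∩ {ω | ξ (j + 1) ω > v / c1})
              ∪ (({ω | ξ (i + 1) ω > v / c1} ∩ {ω | ξ j ω > v / c0}) \ Bset))).toReal :=
              htr _ _ hcover2
          _ ≤ 4 * (w n * w n) := by
              refine stmt4_union4 P _ _ _ _ _ ?_ ?_ ?_ hlastterm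
              · exact hprod_le i j _ _ (by omega) (hEa i) (hEa j)
              · exact hprod_le i (j + 1) _ _ (by omega) (hEa i) (hEb (j + 1))
              · exact hprod_le (i + 1) (j + 1) _ _ (by omega) (hEb (i + 1)) (hEb (j + 1))
      have hcardK : (K1.card : ℝ) ≤ R ∧ (K2.card : ℝ) ≤ R := by
        constructor
        · have h2 : (K1.card) = ((rz + 1 - 1 : ℤ)).toNat := Int.card_Icc _ _
          have h3 : ((rz + 1 - 1 : ℤ)).toNat = r n := by omega
          rw [h2, h3, hRdef]
        · have h2 : (K2.card) = ((2 * rz + 1 - (rz + 1) : ℤ)).toNat := Int.card_Icc _ _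
          have h3 : ((2 * rz + 1 - (rz + 1) : ℤ)).toNat = r n := by omega
          rw [h2, h3, hRdef]
      calc (P (S \ Bset)).toReal
          ≤ (P (⋃ i ∈ K1, ⋃ j ∈ K2, (({ω | X i ω > v} ∩ {ω | X j ω > v}) \ Bset))).toReal :=
            htr _ _ hScover
        _ ≤ ∑ i ∈ K1, (P (⋃ j ∈ K2, (({ω | X i ω > v} ∩ {ω | X j ω > v}) \ Bset))).toReal := by
            refine le_trans (ENNReal.toReal_mono
              (by
                refine (ENNReal.sum_lt_top.mpr (fun a _ => ?_)).ne
                exact measure_lt_top _ _)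
              (measure_biUnion_finset_le K1 _)) ?_
            rw [ENNReal.toReal_sum (fun a _ => measure_ne_top _ _)]
        _ ≤ ∑ i ∈ K1, ∑ j ∈ K2, (P (({ω | X i ω > v} ∩ {ω | X j ω > v}) \ Bset)).toReal := by
            refine Finset.sum_le_sum (fun i _ => ?_)
            refine le_trans (ENNReal.toReal_mono
              (by
                refine (ENNReal.sum_lt_top.mpr (fun a _ => ?_)).ne
                exact measure_lt_top _ _)
              (measure_biUnion_finset_le K2 _)) ?_
            rw [ENNReal.toReal_sum (fun a _ => measure_ne_top _ _)]
        _ ≤ ∑ i ∈ K1, ∑ _j ∈ K2, 4 * (w n * w n) := by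
            refine Finset.sum_le_sum (fun i hi => Finset.sum_le_sum (fun j hj => ?_))
            exact hpair i hi j hj
        _ = (K1.card : ℝ) * ((K2.card : ℝ) * (4 * (w n * w n))) := by
            rw [Finset.sum_const, Finset.sum_const, nsmul_eq_mul, nsmul_eq_mul]
        _ ≤ R * (R * (4 * (w n * w n))) := by
            have hwnn2 : (0:ℝ) ≤ 4 * (w n * w n) := by
              have := mul_nonneg hwnn hwnn; linarith
            have hinner : (K2.card : ℝ) * (4 * (w n * w n)) ≤ R * (4 * (w n * w n)) :=
              mul_le_mul_of_nonneg_right hcardK.2 hwnn2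
            refine mul_le_mul hcardK.1 hinner ?_ (by linarith)
            exact mul_nonneg (Nat.cast_nonneg _) hwnn2
        _ = 4 * R ^ 2 * (w n) ^ 2 := by ring
    -- bound for the second integral
    have hI2nonneg : 0 ≤ ∫ ω in S \ (Bset ∩ G), f ω ∂P :=
      setIntegral_nonneg (hSm.diff hBGm) (fun ω hω => by linarith [(hfb ω hω.1).1])
    have hdiffcover : S \ (Bset ∩ G) ⊆ (S \ Bset) ∪ (Bset \ G) := by
      rintro ω ⟨hωS, hωBG⟩
      by_cases hωB : ω ∈ Bset
      · exact Or.inr ⟨hωB, fun hωG => hωBG ⟨hωB, hωG⟩⟩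
      · exact Or.inl ⟨hωS, hωB⟩
    have hI2le : ∫ ω in S \ (Bset ∩ G), f ω ∂P
        ≤ (2 * R) ^ γ * (4 * R ^ 2 * (w n) ^ 2 + 4 * R * (w n) ^ 2) := by
      have h1 : ∫ ω in S \ (Bset ∩ G), f ω ∂P ≤ ∫ _ω in S \ (Bset ∩ G), (2 * R) ^ γ ∂P := by
        apply setIntegral_mono_on (hfint.mono_set Set.diff_subset)
          (integrableOn_const (measure_ne_top _ _)) (hSm.diff hBGm)
        exact fun ω hω => (hfb ω hω.1).2
      rw [setIntegral_const] at h1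
      have h2 : (P (S \ (Bset ∩ G))).toReal ≤ 4 * R ^ 2 * (w n) ^ 2 + 4 * R * (w n) ^ 2 := by
        calc (P (S \ (Bset ∩ G))).toReal ≤ (P ((S \ Bset) ∪ (Bset \ G))).toReal :=
              htr _ _ hdiffcover
          _ ≤ (P (S \ Bset)).toReal + (P (Bset \ G)).toReal := htru _ _
          _ ≤ 4 * R ^ 2 * (w n) ^ 2 + 4 * R * (w n) ^ 2 := by linarith [bound1, bound2]
      have h3 : (0:ℝ) ≤ (2 * R) ^ γ := Real.rpow_nonneg (by linarith) γ
      calc ∫ ω in S \ (Bset ∩ G), f ω ∂P ≤ (P (S \ (Bset ∩ G))).toReal • (2 * R) ^ γ := h1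
        _ = (P (S \ (Bset ∩ G))).toReal * (2 * R) ^ γ := by rw [smul_eq_mul]
        _ ≤ (4 * R ^ 2 * (w n) ^ 2 + 4 * R * (w n) ^ 2) * (2 * R) ^ γ := by
            apply mul_le_mul_of_nonneg_right h2 h3
        _ = (2 * R) ^ γ * (4 * R ^ 2 * (w n) ^ 2 + 4 * R * (w n) ^ 2) := by ring
    -- measure split of Bset
    have hBsplit : (P Bset).toReal = (P (Bset ∩ G)).toReal + (P (Bset \ G)).toReal := by
      have h := measure_inter_add_diff (μ := P) Bset hGm
      have := congrArg ENNReal.toReal h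
      rw [ENNReal.toReal_add (measure_ne_top _ _) (measure_ne_top _ _)] at this
      linarith [this]
    have hBGnn : 0 ≤ (P (Bset \ G)).toReal := ENNReal.toReal_nonneg
    -- rpow computations
    have h2γ : (1:ℝ) ≤ (2:ℝ) ^ γ := Real.one_le_rpow one_le_two hγ
    have h2Rγ : (2 * R) ^ γ = (2:ℝ) ^ γ * R ^ γ := Real.mul_rpow (by norm_num) (by linarith)
    have hR2 : R ^ (2:ℝ) = R ^ (2:ℕ) := by
      rw [← Real.rpow_natCast R 2]
      norm_num
    have hQ2 : R ^ γ * R ^ (2:ℕ) = R ^ (γ + 2) := by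
      rw [Real.rpow_add hRpos, hR2]
    have hQ1 : R ^ γ * R ≤ R ^ (γ + 2) := by
      have h1 : R ^ γ * R = R ^ (γ + 1) := by
        rw [Real.rpow_add hRpos, Real.rpow_one]
      rw [h1]
      exact Real.rpow_le_rpow_of_exponent_le hR1 (by linarith)
    have hQ0 : R ≤ R ^ (γ + 2) := by
      calc R = R ^ (1:ℝ) := (Real.rpow_one R).symm
        _ ≤ R ^ (γ + 2) := Real.rpow_le_rpow_of_exponent_le hR1 (by linarith)
    have hQnn : 0 ≤ R ^ (γ + 2) := Real.rpow_nonneg hRpos.le _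
    have h2γ4 : (2:ℝ) ^ (γ + 4) = 16 * (2:ℝ) ^ γ := by
      rw [Real.rpow_add (by norm_num : (0:ℝ) < 2),
        show ((4:ℝ)) = ((4:ℕ):ℝ) by norm_num, Real.rpow_natCast 2 4]
      norm_num
      ring
    -- put it all together
    set E : ℝ := (2:ℝ) ^ γ * (R ^ (γ + 2) * (w n) ^ 2) with hEdef
    have hW2 : (0:ℝ) ≤ (w n) ^ 2 := sq_nonneg _
    have hEnn : 0 ≤ E := by
      rw [hEdef]
      exact mul_nonneg (Real.rpow_nonneg (by norm_num) _) (mul_nonneg hQnn hW2)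
    have hI2le' : ∫ ω in S \ (Bset ∩ G), f ω ∂P ≤ 8 * E := by
      refine hI2le.trans ?_
      rw [h2Rγ]
      have e : (2:ℝ) ^ γ * R ^ γ * (4 * R ^ 2 * (w n) ^ 2 + 4 * R * (w n) ^ 2)
          = 4 * (2:ℝ) ^ γ * (R ^ γ * R ^ 2 * (w n) ^ 2)
            + 4 * (2:ℝ) ^ γ * (R ^ γ * R * (w n) ^ 2) := by ring
      rw [e, hQ2]
      have t2 : R ^ γ * R * (w n) ^ 2 ≤ R ^ (γ + 2) * (w n) ^ 2 :=
        mul_le_mul_of_nonneg_right hQ1 hW2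
      have t3 : 4 * (2:ℝ) ^ γ * (R ^ γ * R * (w n) ^ 2)
          ≤ 4 * (2:ℝ) ^ γ * (R ^ (γ + 2) * (w n) ^ 2) := by
        refine mul_le_mul_of_nonneg_left t2 ?_
        have : (0:ℝ) ≤ (2:ℝ) ^ γ := Real.rpow_nonneg (by norm_num) _
        linarith
      rw [hEdef]
      ring_nf
      ring_nf at t3 ⊢
      nlinarith [t3]
    have hBG' : (P (Bset \ G)).toReal ≤ 8 * E := by
      refine bound1.trans ?_
      have t1 : R * (w n) ^ 2 ≤ R ^ (γ + 2) * (w n) ^ 2 := mul_le_mul_of_nonneg_right hQ0 hW2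
      have h2γnn : (0:ℝ) ≤ (2:ℝ) ^ γ := Real.rpow_nonneg (by norm_num) _
      have t2 : R ^ (γ + 2) * (w n) ^ 2 ≤ (2:ℝ) ^ γ * (R ^ (γ + 2) * (w n) ^ 2) := by
        have hx : 0 ≤ R ^ (γ + 2) * (w n) ^ 2 := mul_nonneg hQnn hW2
        nlinarith [h2γ]
      rw [hEdef]
      nlinarith [t1, t2]
    have hItot : |(∫ ω in S, f ω ∂P) - F (v / m)| ≤ 16 * E := by
      rw [← hPrB, hIsplit, hI1]
      have habs : (P (Bset ∩ G)).toReal + (∫ ω in S \ (Bset ∩ G), f ω ∂P) - (P Bset).toReal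
          = (∫ ω in S \ (Bset ∩ G), f ω ∂P) - (P (Bset \ G)).toReal := by
        rw [hBsplit]; ring
      rw [habs, abs_le]
      constructor
      · linarith [hI2nonneg, hBG']
      · linarith [hI2le', hBGnn]
    have h16E : 16 * E = (2:ℝ) ^ (γ + 4) * (R ^ (γ + 2) * (w n) ^ 2) := by
      rw [hEdef, h2γ4]; ring
    have hgoal : |1 / w n * (∫ ω in S, f ω ∂P) - F (v / m) / w n|
        ≤ (2:ℝ) ^ (γ + 4) * (R ^ (γ + 2) * w n) := by
      have hwne : w n ≠ 0 := (hwpos n).ne'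
      have he : 1 / w n * (∫ ω in S, f ω ∂P) - F (v / m) / w n
          = ((∫ ω in S, f ω ∂P) - F (v / m)) * (1 / w n) := by
        field_simp
      rw [he, abs_mul, abs_of_pos (by positivity : (0:ℝ) < 1 / w n)]
      calc |(∫ ω in S, f ω ∂P) - F (v / m)| * (1 / w n)
          ≤ (16 * E) * (1 / w n) := by
            apply mul_le_mul_of_nonneg_right hItot (by positivity)
        _ = (2:ℝ) ^ (γ + 4) * (R ^ (γ + 2) * w n) := by
            rw [h16E]
            field_simp
    exact hgoal
  -- conclusion
  have hbnd0 : Tendsto (fun n => (2:ℝ) ^ (γ + 4) * ((r n : ℝ) ^ (γ + 2) * w n)) atTop (nhds 0) := by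
    have h := hsmall.const_mul ((2:ℝ) ^ (γ + 4))
    simpa using h
  have hzero : Tendsto (fun n => (1 / w n) *
      (∫ ω in (A n 1 ∩ A n 2), ((tlast n 2 ω - tfirst n 1 ω : ℤ) : ℝ) ^ γ ∂P)
      - F (u n / m) / w n) atTop (nhds 0) := by
    apply squeeze_zero_norm' ?_ hbnd0
    filter_upwards [hband] with n hn
    simpa [Real.norm_eq_abs] using hn
  have := hMain.add hzero
  rw [add_zero] at this
  refine this.congr (fun n => ?_)
  ring
end

section
/- (Gap between the last exceedance of block 1 and the first exceedance of block 2, MMA(1).) For the MMA(1) process, lim_{n→∞} (1/(r_n^3 w_n^2)) E[1_{A_1 ∩ A_2} · max(t_2^{first} − t_1^{last} − r_n, 0)] = θ^2/6, where θ = (max(c_0,c_1))^α / (c_0^α + c_1^α). -/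
open MeasureTheory Filter ProbabilityTheory

section SumLemmas
open Finset

lemma icc_succ (m : ℕ) : Finset.Icc (1:ℤ) ((m:ℤ)+1) = insert ((m:ℤ)+1) (Finset.Icc 1 (m:ℤ)) := by
  ext x; simp only [Finset.mem_Icc, Finset.mem_insert]; omega

lemma aux_gaussIcc (m : ℕ) : ∑ a ∈ Finset.Icc (1:ℤ) (m:ℤ), (a:ℝ) = m*(m+1)/2 := by
  induction m with
  | zero => simp
  | succ k ih =>
    have hc : ((k+1:ℕ):ℤ) = (k:ℤ)+1 := by push_cast; ring
    rw [hc, icc_succ k, Finset.sum_insert (by simp)]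
    rw [ih]
    push_cast
    ring

lemma aux_sqIcc (m : ℕ) : ∑ a ∈ Finset.Icc (1:ℤ) (m:ℤ), (a:ℝ)^2 = m*(m+1)*(2*m+1)/6 := by
  induction m with
  | zero => simp
  | succ k ih =>
    have hc : ((k+1:ℕ):ℤ) = (k:ℤ)+1 := by push_cast; ring
    rw [hc, icc_succ k, Finset.sum_insert (by simp)]
    rw [ih]
    push_cast
    ring

lemma aux_row (N : ℕ) : ∑ a ∈ Finset.Icc (1:ℤ) (N:ℤ), max (((N:ℤ) - a : ℤ):ℝ) 0 = N*(N-1)/2 := by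
  have h1 : ∀ a ∈ Finset.Icc (1:ℤ) (N:ℤ), max (((N:ℤ) - a : ℤ):ℝ) 0 = (N:ℝ) - (a:ℝ) := by
    intro a ha
    rw [Finset.mem_Icc] at ha
    rw [max_eq_left]
    · push_cast; ring
    · have : (a:ℝ) ≤ (N:ℝ) := by exact_mod_cast ha.2
      push_cast; linarith
  rw [Finset.sum_congr rfl h1, Finset.sum_sub_distrib, Finset.sum_const, aux_gaussIcc]
  rw [Int.card_Icc]
  have : ((N:ℤ) + 1 - 1).toNat = N := by omega
  rw [this]
  push_cast; ring

lemma aux_row' (k : ℤ) (hk : 0 ≤ k) :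
    ∑ a ∈ Finset.Icc (1:ℤ) k, max ((k - a : ℤ):ℝ) 0 = (k:ℝ)*((k:ℝ)-1)/2 := by
  obtain ⟨N, rfl⟩ := Int.eq_ofNat_of_zero_le hk
  exact_mod_cast aux_row N

lemma aux_double (m : ℕ) :
    ∑ k ∈ Finset.Icc (1:ℤ) (m:ℤ), ∑ a ∈ Finset.Icc (1:ℤ) (m:ℤ), max (((k - a : ℤ)):ℝ) 0
      = m*(m+1)*(m-1)/6 := by
  have hinner : ∀ k ∈ Finset.Icc (1:ℤ) (m:ℤ),
      ∑ a ∈ Finset.Icc (1:ℤ) (m:ℤ), max (((k - a : ℤ)):ℝ) 0 = (k:ℝ)*((k:ℝ)-1)/2 := by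
    intro k hk
    rw [Finset.mem_Icc] at hk
    rw [← aux_row' k (by omega)]
    symm
    apply Finset.sum_subset
    · intro x hx; rw [Finset.mem_Icc] at hx ⊢; omega
    · intro x hx hnx
      rw [Finset.mem_Icc] at hx hnx
      have hxk : k < x := by omega
      rw [max_eq_right]
      have : (k:ℝ) < (x:ℝ) := by exact_mod_cast hxk
      push_cast
      linarith
  rw [Finset.sum_congr rfl hinner]
  have : ∀ k ∈ Finset.Icc (1:ℤ) (m:ℤ), (k:ℝ)*((k:ℝ)-1)/2 = ((k:ℝ)^2 - (k:ℝ))/2 := by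
    intro k _; ring
  rw [Finset.sum_congr rfl this]
  rw [← Finset.sum_div, Finset.sum_sub_distrib, aux_sqIcc, aux_gaussIcc]
  ring

lemma sum_wt (m : ℕ) :
    ∑ a ∈ Finset.Icc (1:ℤ) (m:ℤ), ∑ b ∈ Finset.Icc ((m:ℤ)+1) (2*(m:ℤ)),
      max (((b - a - (m:ℤ) : ℤ)):ℝ) 0 = m*(m+1)*(m-1)/6 := by
  have hmap : ∀ a : ℤ,
      ∑ b ∈ Finset.Icc ((m:ℤ)+1) (2*(m:ℤ)), max (((b - a - (m:ℤ) : ℤ)):ℝ) 0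
        = ∑ k ∈ Finset.Icc (1:ℤ) (m:ℤ), max (((k - a : ℤ)):ℝ) 0 := by
    intro a
    have : Finset.Icc ((m:ℤ)+1) (2*(m:ℤ))
        = (Finset.Icc (1:ℤ) (m:ℤ)).map (addRightEmbedding (m:ℤ)) := by
      rw [Finset.map_add_right_Icc]; congr 1 <;> ring
    rw [this, Finset.sum_map]
    apply Finset.sum_congr rfl
    intro k _
    simp only [addRightEmbedding_apply]
    congr 2
    ring
  rw [Finset.sum_congr rfl (fun a _ => hmap a), Finset.sum_comm, aux_double]

end SumLemmas

lemma rect_prob {Ω : Type*} [MeasurableSpace Ω] (P : Measure Ω) [IsProbabilityMeasure P]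
    (ξ : ℤ → Ω → ℝ) (hmeas : ∀ j, Measurable (ξ j))
    (hindep : iIndepFun ξ P)
    (hident : ∀ j, Measure.map (ξ j) P = Measure.map (ξ 0) P)
    (a b : ℤ) (hab : a + 2 ≤ b)
    (Sa Sa1 Smid Sb Sb1 : Set ℝ) (hSa : MeasurableSet Sa) (hSa1 : MeasurableSet Sa1)
    (hSmid : MeasurableSet Smid) (hSb : MeasurableSet Sb) (hSb1 : MeasurableSet Sb1) :
    P (ξ a ⁻¹' Sa ∩ ξ (a+1) ⁻¹' Sa1 ∩ (⋂ j ∈ Finset.Ioo (a+1) b, ξ j ⁻¹' Smid)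
        ∩ ξ b ⁻¹' Sb ∩ ξ (b+1) ⁻¹' Sb1)
      = P (ξ 0 ⁻¹' Sa) * P (ξ 0 ⁻¹' Sa1) * P (ξ 0 ⁻¹' Smid)^((b-a-2).toNat)
        * P (ξ 0 ⁻¹' Sb) * P (ξ 0 ⁻¹' Sb1) := by
  classical
  have hident' : ∀ (j : ℤ) (S : Set ℝ), MeasurableSet S → P (ξ j ⁻¹' S) = P (ξ 0 ⁻¹' S) := by
    intro j S hS
    rw [← Measure.map_apply (hmeas j) hS, hident j, Measure.map_apply (hmeas 0) hS]
  set sets : ℤ → Set ℝ := fun j =>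
    if j = a then Sa else if j = a+1 then Sa1 else if j = b then Sb else if j = b+1 then Sb1
      else Smid with hsets
  have hmeas_sets : ∀ j, MeasurableSet (sets j) := by
    intro j; simp only [hsets]; split_ifs <;> assumption
  have hset_eq : ξ a ⁻¹' Sa ∩ ξ (a+1) ⁻¹' Sa1 ∩ (⋂ j ∈ Finset.Ioo (a+1) b, ξ j ⁻¹' Smid)
        ∩ ξ b ⁻¹' Sb ∩ ξ (b+1) ⁻¹' Sb1
      = ⋂ j ∈ Finset.Icc a (b+1), ξ j ⁻¹' sets j := by
    ext ω
    simp only [Set.mem_inter_iff, Set.mem_iInter, Set.mem_preimage, Finset.mem_Icc,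
      Finset.mem_Ioo]
    constructor
    · rintro ⟨⟨⟨⟨h1, h2⟩, h3⟩, h4⟩, h5⟩ j hj
      simp only [hsets]
      split_ifs with e1 e2 e3 e4
      · subst e1; exact h1
      · subst e2; exact h2
      · subst e3; exact h4
      · subst e4; exact h5
      · exact h3 j ⟨by omega, by omega⟩
    · intro h
      have ha := h a ⟨le_refl a, by omega⟩
      have ha1 := h (a+1) ⟨by omega, by omega⟩
      have hb := h b ⟨by omega, by omega⟩
      have hb1 := h (b+1) ⟨by omega, by omega⟩
      simp only [hsets] at ha ha1 hb hb1
      rw [if_pos trivial] at ha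
      rw [if_neg (by omega), if_pos trivial] at ha1
      rw [if_neg (by omega), if_neg (by omega), if_pos trivial] at hb
      rw [if_neg (by omega), if_neg (by omega), if_neg (by omega), if_pos trivial] at hb1
      refine ⟨⟨⟨⟨ha, ha1⟩, ?_⟩, hb⟩, hb1⟩
      intro j hj
      have := h j ⟨by omega, by omega⟩
      simp only [hsets] at this
      rw [if_neg (by omega), if_neg (by omega), if_neg (by omega), if_neg (by omega)] at this
      exact this
  rw [hset_eq,
    hindep.measure_inter_preimage_eq_mul (Finset.Icc a (b+1)) (fun i _ => hmeas_sets i)]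
  have hprod_congr : ∀ j ∈ Finset.Icc a (b+1), P (ξ j ⁻¹' sets j) = P (ξ 0 ⁻¹' sets j) :=
    fun j _ => hident' j _ (hmeas_sets j)
  rw [Finset.prod_congr rfl hprod_congr]
  have hdecomp : Finset.Icc a (b+1)
      = insert a (insert (a+1) (insert b (insert (b+1) (Finset.Ioo (a+1) b)))) := by
    ext x
    simp only [Finset.mem_Icc, Finset.mem_insert, Finset.mem_Ioo]
    omega
  rw [hdecomp]
  rw [Finset.prod_insert (by simp only [Finset.mem_insert, Finset.mem_Ioo]; omega)]
  rw [Finset.prod_insert (by simp only [Finset.mem_insert, Finset.mem_Ioo]; omega)]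
  rw [Finset.prod_insert (by simp only [Finset.mem_insert, Finset.mem_Ioo]; omega)]
  rw [Finset.prod_insert (by simp only [Finset.mem_Ioo]; omega)]
  have hmid : ∀ j ∈ Finset.Ioo (a+1) b, P (ξ 0 ⁻¹' sets j) = P (ξ 0 ⁻¹' Smid) := by
    intro j hj
    rw [Finset.mem_Ioo] at hj
    simp only [hsets]
    rw [if_neg (by omega), if_neg (by omega), if_neg (by omega), if_neg (by omega)]
  rw [Finset.prod_congr rfl hmid, Finset.prod_const, Int.card_Ioo]
  have hca : sets a = Sa := by simp only [hsets]; rw [if_pos trivial]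
  have hca1 : sets (a+1) = Sa1 := by simp only [hsets]; rw [if_neg (by omega), if_pos trivial]
  have hcb : sets b = Sb := by
    simp only [hsets]; rw [if_neg (by omega), if_neg (by omega), if_pos trivial]
  have hcb1 : sets (b+1) = Sb1 := by
    simp only [hsets]
    rw [if_neg (by omega), if_neg (by omega), if_neg (by omega), if_pos trivial]
  rw [hca, hca1, hcb, hcb1]
  have hcard : (b - (a+1) - 1).toNat = (b - a - 2).toNat := by omega
  rw [hcard]
  ring


lemma prob_B {Ω : Type*} [MeasurableSpace Ω] (P : Measure Ω) [IsProbabilityMeasure P]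
    (ξ : ℤ → Ω → ℝ) (hmeas : ∀ j, Measurable (ξ j))
    (hindep : iIndepFun ξ P)
    (hident : ∀ j, Measure.map (ξ j) P = Measure.map (ξ 0) P)
    (c0 c1 : ℝ) (hc0 : 0 < c0) (hc1 : 0 < c1)
    (X : ℤ → Ω → ℝ) (hX : ∀ j ω, X j ω = max (c0 * ξ j ω) (c1 * ξ (j + 1) ω))
    (U : ℝ) (a b : ℤ) (hab : a + 2 ≤ b) :
    (P ({ω | X a ω > U} ∩ {ω | ∀ i : ℤ, a < i → i < b → X i ω ≤ U} ∩ {ω | X b ω > U})).toReal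
      = (P {ω | ξ 0 ω ≤ U/c0}).toReal * (P {ω | ξ 0 ω ≤ U/c1}).toReal
        * ((P {ω | ξ 0 ω > min (U/c0) (U/c1)}).toReal)^2
        * ((P {ω | ξ 0 ω ≤ min (U/c0) (U/c1)}).toReal)^((b-a-2).toNat) := by
  classical
  set Ca := U/c0 with hCa
  set Cb := U/c1 with hCb
  set M := min Ca Cb with hM
  -- basic equivalences
  have hdivlt : ∀ (c x : ℝ), 0 < c → (U / c < x ↔ U < c * x) := by
    intro c x hc; rw [div_lt_iff₀ hc, mul_comm]
  have hdivle : ∀ (c x : ℝ), 0 < c → (x ≤ U / c ↔ c * x ≤ U) := by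
    intro c x hc; rw [le_div_iff₀ hc, mul_comm]
  have hXgt : ∀ (i : ℤ) (ω : Ω), X i ω > U ↔ (ξ i ω > Ca ∨ ξ (i+1) ω > Cb) := by
    intro i ω
    have h1 : (X i ω > U) ↔ (U < c0 * ξ i ω ∨ U < c1 * ξ (i+1) ω) := by
      rw [hX]; exact lt_max_iff
    rw [h1, hCa, hCb]
    constructor
    · rintro (h | h)
      · exact Or.inl ((hdivlt c0 _ hc0).mpr h)
      · exact Or.inr ((hdivlt c1 _ hc1).mpr h)
    · rintro (h | h)
      · exact Or.inl ((hdivlt c0 _ hc0).mp h)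
      · exact Or.inr ((hdivlt c1 _ hc1).mp h)
  have hXle : ∀ (i : ℤ) (ω : Ω), X i ω ≤ U ↔ (ξ i ω ≤ Ca ∧ ξ (i+1) ω ≤ Cb) := by
    intro i ω
    have h1 : (X i ω ≤ U) ↔ (c0 * ξ i ω ≤ U ∧ c1 * ξ (i+1) ω ≤ U) := by
      rw [hX]; exact max_le_iff
    rw [h1, hCa, hCb]
    constructor
    · rintro ⟨h1, h2⟩
      exact ⟨(hdivle c0 _ hc0).mpr h1, (hdivle c1 _ hc1).mpr h2⟩
    · rintro ⟨h1, h2⟩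
      exact ⟨(hdivle c0 _ hc0).mp h1, (hdivle c1 _ hc1).mp h2⟩
  -- the four rectangles
  set mid : Set Ω := ⋂ j ∈ Finset.Ioo (a+1) b, ξ j ⁻¹' (Set.Iic M) with hmid
  set R1 : Set Ω := ξ a ⁻¹' (Set.Ioi Ca) ∩ ξ (a+1) ⁻¹' (Set.Iic M) ∩ mid
      ∩ ξ b ⁻¹' (Set.Iic M) ∩ ξ (b+1) ⁻¹' (Set.Ioi Cb) with hR1
  set R2 : Set Ω := ξ a ⁻¹' (Set.Ioi Ca) ∩ ξ (a+1) ⁻¹' (Set.Iic M) ∩ mid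
      ∩ ξ b ⁻¹' (Set.Ioc M Cb) ∩ ξ (b+1) ⁻¹' (Set.univ) with hR2
  set R3 : Set Ω := ξ a ⁻¹' (Set.univ) ∩ ξ (a+1) ⁻¹' (Set.Ioc M Ca) ∩ mid
      ∩ ξ b ⁻¹' (Set.Iic M) ∩ ξ (b+1) ⁻¹' (Set.Ioi Cb) with hR3
  set R4 : Set Ω := ξ a ⁻¹' (Set.univ) ∩ ξ (a+1) ⁻¹' (Set.Ioc M Ca) ∩ mid
      ∩ ξ b ⁻¹' (Set.Ioc M Cb) ∩ ξ (b+1) ⁻¹' (Set.univ) with hR4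
  have hMCa : M ≤ Ca := min_le_left _ _
  have hMCb : M ≤ Cb := min_le_right _ _
  have hIocCa : ∀ x : ℝ, M < x → x ≤ Ca → x > Cb := by
    intro x h1 h2
    rcases le_total Ca Cb with hle | hle
    · rw [hM, min_eq_left hle] at h1; linarith
    · rw [hM, min_eq_right hle] at h1; linarith
  have hIocCb : ∀ x : ℝ, M < x → x ≤ Cb → x > Ca := by
    intro x h1 h2
    rcases le_total Ca Cb with hle | hle
    · rw [hM, min_eq_left hle] at h1; linarith
    · rw [hM, min_eq_right hle] at h1; linarith
  -- decomposition
  have hunion : {ω | X a ω > U} ∩ {ω | ∀ i : ℤ, a < i → i < b → X i ω ≤ U} ∩ {ω | X b ω > U}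
      = (R1 ∪ R2) ∪ (R3 ∪ R4) := by
    ext ω
    simp only [hR1, hR2, hR3, hR4, hmid, Set.mem_inter_iff, Set.mem_union, Set.mem_setOf_eq,
      Set.mem_preimage, Set.mem_Ioi, Set.mem_Iic, Set.mem_Ioc, Set.mem_univ, true_and, and_true,
      Set.mem_iInter, Finset.mem_Ioo]
    constructor
    · rintro ⟨⟨hXa, hmidX⟩, hXb⟩
      have hm1 : ξ (a+1) ω ≤ Ca := ((hXle (a+1) ω).mp (hmidX (a+1) (by omega) (by omega))).1
      have hmb : ξ b ω ≤ Cb := by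
        have := ((hXle (b-1) ω).mp (hmidX (b-1) (by omega) (by omega))).2
        rwa [show b - 1 + 1 = b by ring] at this
      have hmmid : ∀ j : ℤ, a+1 < j → j < b → ξ j ω ≤ M := by
        intro j hj1 hj2
        have h1 : ξ j ω ≤ Ca := ((hXle j ω).mp (hmidX j (by omega) (by omega))).1
        have h2 : ξ j ω ≤ Cb := by
          have := ((hXle (j-1) ω).mp (hmidX (j-1) (by omega) (by omega))).2
          rwa [show j - 1 + 1 = j by ring] at this
        exact le_min h1 h2
      have hXa' := (hXgt a ω).mp hXa
      have hXb' := (hXgt b ω).mp hXb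
      rcases le_or_gt (ξ (a+1) ω) M with hA | hA
      · have hxa : ξ a ω > Ca := by
          rcases hXa' with h | h
          · exact h
          · exfalso; linarith [hMCb]
        rcases le_or_gt (ξ b ω) M with hB | hB
        · have hxb1 : ξ (b+1) ω > Cb := by
            rcases hXb' with h | h
            · exfalso; linarith [hMCa]
            · exact h
          exact Or.inl (Or.inl ⟨⟨⟨⟨hxa, hA⟩, fun j hj => hmmid j hj.1 hj.2⟩, hB⟩, hxb1⟩)
        · exact Or.inl (Or.inr ⟨⟨⟨hxa, hA⟩, fun j hj => hmmid j hj.1 hj.2⟩, hB, hmb⟩)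
      · rcases le_or_gt (ξ b ω) M with hB | hB
        · have hxb1 : ξ (b+1) ω > Cb := by
            rcases hXb' with h | h
            · exfalso; linarith [hMCa]
            · exact h
          exact Or.inr (Or.inl ⟨⟨⟨⟨hA, hm1⟩, fun j hj => hmmid j hj.1 hj.2⟩, hB⟩, hxb1⟩)
        · exact Or.inr (Or.inr ⟨⟨⟨hA, hm1⟩, fun j hj => hmmid j hj.1 hj.2⟩, hB, hmb⟩)
    · -- backward
      intro h
      have hcore : (ξ (a+1) ω ≤ Ca) ∧ (∀ j : ℤ, a+1 < j → j < b → ξ j ω ≤ M)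
          ∧ (ξ b ω ≤ Cb) ∧ (X a ω > U) ∧ (X b ω > U) := by
        rcases h with (⟨⟨⟨⟨hxa, ha1⟩, hm⟩, hb⟩, hb1⟩ | ⟨⟨⟨hxa, ha1⟩, hm⟩, hb, hb'⟩) |
          (⟨⟨⟨ha1, hm⟩, hb⟩, hb1⟩ | ⟨⟨ha1, hm⟩, hb, hb'⟩)
        · exact ⟨le_trans ha1 hMCa, fun j hj1 hj2 => hm j ⟨hj1, hj2⟩, le_trans hb hMCb,
            (hXgt a ω).mpr (Or.inl hxa), (hXgt b ω).mpr (Or.inr hb1)⟩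
        · exact ⟨le_trans ha1 hMCa, fun j hj1 hj2 => hm j ⟨hj1, hj2⟩, hb',
            (hXgt a ω).mpr (Or.inl hxa),
            (hXgt b ω).mpr (Or.inl (hIocCb _ hb hb'))⟩
        · exact ⟨ha1.2, fun j hj1 hj2 => hm j ⟨hj1, hj2⟩, le_trans hb hMCb,
            (hXgt a ω).mpr (Or.inr (hIocCa _ ha1.1 ha1.2)),
            (hXgt b ω).mpr (Or.inr hb1)⟩
        · exact ⟨ha1.2, fun j hj1 hj2 => hm j ⟨hj1, hj2⟩, hb',
            (hXgt a ω).mpr (Or.inr (hIocCa _ ha1.1 ha1.2)),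
            (hXgt b ω).mpr (Or.inl (hIocCb _ hb hb'))⟩
      obtain ⟨ha1, hm, hb, hXa, hXb⟩ := hcore
      refine ⟨⟨hXa, ?_⟩, hXb⟩
      intro i hi1 hi2
      apply (hXle i ω).mpr
      constructor
      · rcases eq_or_lt_of_le (show a + 1 ≤ i by omega) with he | hlt
        · rw [← he]; exact ha1
        · exact le_trans (hm i hlt hi2) hMCa
      · rcases eq_or_lt_of_le (show i + 1 ≤ b by omega) with he | hlt
        · rw [he]; exact hb
        · exact le_trans (hm (i+1) (by omega) hlt) hMCb
  -- measurability
  have hmidmeas : MeasurableSet mid := by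
    rw [hmid]
    exact MeasurableSet.biInter (Finset.Ioo (a+1) b).countable_toSet
      (fun j _ => hmeas j measurableSet_Iic)
  have hmR1 : MeasurableSet R1 :=
    ((((hmeas a measurableSet_Ioi).inter (hmeas (a+1) measurableSet_Iic)).inter
      hmidmeas).inter (hmeas b measurableSet_Iic)).inter (hmeas (b+1) measurableSet_Ioi)
  have hmR2 : MeasurableSet R2 :=
    ((((hmeas a measurableSet_Ioi).inter (hmeas (a+1) measurableSet_Iic)).inter
      hmidmeas).inter (hmeas b measurableSet_Ioc)).inter (hmeas (b+1) MeasurableSet.univ)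
  have hmR3 : MeasurableSet R3 :=
    ((((hmeas a MeasurableSet.univ).inter (hmeas (a+1) measurableSet_Ioc)).inter
      hmidmeas).inter (hmeas b measurableSet_Iic)).inter (hmeas (b+1) measurableSet_Ioi)
  have hmR4 : MeasurableSet R4 :=
    ((((hmeas a MeasurableSet.univ).inter (hmeas (a+1) measurableSet_Ioc)).inter
      hmidmeas).inter (hmeas b measurableSet_Ioc)).inter (hmeas (b+1) MeasurableSet.univ)
  have hd12 : Disjoint R1 R2 := by
    rw [Set.disjoint_left]
    rintro ω h1 h2
    exact absurd h1.1.2 (not_le.mpr h2.1.2.1)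
  have hd34 : Disjoint R3 R4 := by
    rw [Set.disjoint_left]
    rintro ω h1 h2
    exact absurd h1.1.2 (not_le.mpr h2.1.2.1)
  have hd : Disjoint (R1 ∪ R2) (R3 ∪ R4) := by
    rw [Set.disjoint_left]
    rintro ω (h1 | h1) (h2 | h2) <;>
      exact absurd h1.1.1.1.2 (not_le.mpr h2.1.1.1.2.1)
  -- rectangle probabilities
  have e1 := rect_prob P ξ hmeas hindep hident a b hab (Set.Ioi Ca) (Set.Iic M) (Set.Iic M)
    (Set.Iic M) (Set.Ioi Cb) measurableSet_Ioi measurableSet_Iic measurableSet_Iic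
    measurableSet_Iic measurableSet_Ioi
  have e2 := rect_prob P ξ hmeas hindep hident a b hab (Set.Ioi Ca) (Set.Iic M) (Set.Iic M)
    (Set.Ioc M Cb) Set.univ measurableSet_Ioi measurableSet_Iic measurableSet_Iic
    measurableSet_Ioc MeasurableSet.univ
  have e3 := rect_prob P ξ hmeas hindep hident a b hab Set.univ (Set.Ioc M Ca) (Set.Iic M)
    (Set.Iic M) (Set.Ioi Cb) MeasurableSet.univ measurableSet_Ioc measurableSet_Iic
    measurableSet_Iic measurableSet_Ioi
  have e4 := rect_prob P ξ hmeas hindep hident a b hab Set.univ (Set.Ioc M Ca) (Set.Iic M)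
    (Set.Ioc M Cb) Set.univ MeasurableSet.univ measurableSet_Ioc measurableSet_Iic
    measurableSet_Ioc MeasurableSet.univ
  -- real-valued identities
  have hIoi : ∀ x : ℝ, (P (ξ 0 ⁻¹' Set.Ioi x)).toReal = 1 - (P (ξ 0 ⁻¹' Set.Iic x)).toReal := by
    intro x
    have hcompl : ξ 0 ⁻¹' Set.Ioi x = (ξ 0 ⁻¹' Set.Iic x)ᶜ := by
      ext ω; simp [not_le]
    rw [hcompl, measure_compl (hmeas 0 measurableSet_Iic) (measure_ne_top P _), measure_univ,
      ENNReal.toReal_sub_of_le prob_le_one ENNReal.one_ne_top, ENNReal.toReal_one]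
  have hIoc : ∀ x y : ℝ, x ≤ y → (P (ξ 0 ⁻¹' Set.Ioc x y)).toReal
      = (P (ξ 0 ⁻¹' Set.Iic y)).toReal - (P (ξ 0 ⁻¹' Set.Iic x)).toReal := by
    intro x y hxy
    have hdiff : ξ 0 ⁻¹' Set.Ioc x y = (ξ 0 ⁻¹' Set.Iic y) \ (ξ 0 ⁻¹' Set.Iic x) := by
      ext ω
      simp only [Set.mem_preimage, Set.mem_Ioc, Set.mem_diff, Set.mem_Iic, not_le]
      tauto
    have hsub : (ξ 0 ⁻¹' Set.Iic x) ⊆ (ξ 0 ⁻¹' Set.Iic y) :=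
      Set.preimage_mono (Set.Iic_subset_Iic.mpr hxy)
    rw [hdiff, measure_diff hsub (hmeas 0 measurableSet_Iic).nullMeasurableSet
        (measure_ne_top P _),
      ENNReal.toReal_sub_of_le (measure_mono hsub) (measure_ne_top P _)]
  -- assemble
  have habcd : (P ((R1 ∪ R2) ∪ (R3 ∪ R4))).toReal
      = (P R1).toReal + (P R2).toReal + ((P R3).toReal + (P R4).toReal) := by
    rw [measure_union hd (hmR3.union hmR4), measure_union hd12 hmR2, measure_union hd34 hmR4,
      ENNReal.toReal_add (ENNReal.add_ne_top.mpr ⟨measure_ne_top P _, measure_ne_top P _⟩)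
        (ENNReal.add_ne_top.mpr ⟨measure_ne_top P _, measure_ne_top P _⟩),
      ENNReal.toReal_add (measure_ne_top P _) (measure_ne_top P _),
      ENNReal.toReal_add (measure_ne_top P _) (measure_ne_top P _)]
  rw [hunion, habcd, e1, e2, e3, e4]
  simp only [ENNReal.toReal_mul, ENNReal.toReal_pow]
  rw [hIoi Ca, hIoi Cb, hIoc M Ca hMCa, hIoc M Cb hMCb, Set.preimage_univ, measure_univ,
    ENNReal.toReal_one]
  have hsetIic : ∀ x : ℝ, {ω | ξ 0 ω ≤ x} = ξ 0 ⁻¹' Set.Iic x := fun x => rfl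
  have hsetIoi : {ω : Ω | ξ 0 ω > M} = ξ 0 ⁻¹' Set.Ioi M := rfl
  simp only [hsetIic, hsetIoi]
  rw [hIoi M]
  ring


/-- Gap between the last exceedance of block 1 and the first exceedance of
block 2, MMA(1):
`lim (1/(r_n^3 w_n^2)) E[1_{A₁∩A₂} max(t₂ᶠⁱʳˢᵗ − t₁ᶫᵃˢᵗ − r_n, 0)] = θ²/6`. -/
theorem stmt_6
    {Ω : Type*} [MeasurableSpace Ω] (P : Measure Ω) [IsProbabilityMeasure P]
    (ξ : ℤ → Ω → ℝ) (hmeas : ∀ j, Measurable (ξ j))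
    (hindep : iIndepFun ξ P)
    (hident : ∀ j, Measure.map (ξ j) P = Measure.map (ξ 0) P)
    (hnonneg : ∀ j ω, 0 ≤ ξ j ω)
    (hpos : ∀ x : ℝ, 0 < P {ω | ξ 0 ω > x})
    (α : ℝ) (hα : 0 < α)
    (hRV : ∀ t : ℝ, 0 < t →
      Tendsto (fun x : ℝ => (P {ω | ξ 0 ω > t * x}).toReal / (P {ω | ξ 0 ω > x}).toReal)
        atTop (nhds (t ^ (-α))))
    (c0 c1 : ℝ) (hc0 : 0 < c0) (hc1 : 0 < c1)
    (X : ℤ → Ω → ℝ) (hX : ∀ j ω, X j ω = max (c0 * ξ j ω) (c1 * ξ (j + 1) ω))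
    (u : ℕ → ℝ) (hu : Tendsto u atTop atTop)
    (w : ℕ → ℝ) (hw : ∀ n, w n = (P {ω | X 0 ω > u n}).toReal)
    (r : ℕ → ℕ) (hrpos : ∀ n, 0 < r n)
    (hr : Tendsto (fun n => (r n : ℝ)) atTop atTop)
    (hrw : Tendsto (fun n => (r n : ℝ) * w n) atTop (nhds 0))
    (A : ℕ → ℤ → Set Ω)
    (hA : ∀ n (j : ℤ), A n j =
      {ω | ∃ i : ℤ, (j - 1) * (r n : ℤ) + 1 ≤ i ∧ i ≤ j * (r n : ℤ) ∧ X i ω > u n})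
    (tfirst tlast : ℕ → ℤ → Ω → ℤ)
    (htfirst : ∀ n (j : ℤ) ω, tfirst n j ω =
      sInf {i : ℤ | (j - 1) * (r n : ℤ) + 1 ≤ i ∧ i ≤ j * (r n : ℤ) ∧ X i ω > u n})
    (htlast : ∀ n (j : ℤ) ω, tlast n j ω =
      sSup {i : ℤ | (j - 1) * (r n : ℤ) + 1 ≤ i ∧ i ≤ j * (r n : ℤ) ∧ X i ω > u n})
    (θ : ℝ) (hθ : θ = (max c0 c1) ^ α / (c0 ^ α + c1 ^ α)) :
    Tendsto (fun n => (1 / ((r n : ℝ) ^ 3 * w n ^ 2)) *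
        ∫ ω in (A n 1 ∩ A n 2),
          max ((tfirst n 2 ω - tlast n 1 ω - (r n : ℤ) : ℤ) : ℝ) 0 ∂P)
      atTop (nhds (θ ^ 2 / 6)) := by
  classical
  have hmax : (0:ℝ) < max c0 c1 := lt_max_iff.mpr (Or.inl hc0)
  have hXmeas : ∀ i : ℤ, Measurable (X i) := by
    intro i
    have hfe : X i = fun ω => max (c0 * ξ i ω) (c1 * ξ (i+1) ω) := funext (hX i)
    rw [hfe]
    exact (measurable_const.mul (hmeas i)).max (measurable_const.mul (hmeas (i+1)))
  have hident' : ∀ (j : ℤ) (S : Set ℝ), MeasurableSet S → P (ξ j ⁻¹' S) = P (ξ 0 ⁻¹' S) := by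
    intro j S hS
    rw [← Measure.map_apply (hmeas j) hS, hident j, Measure.map_apply (hmeas 0) hS]
  set G : ℝ → ℝ := fun x => (P {ω | ξ 0 ω ≤ x}).toReal with hGdef
  set H : ℝ → ℝ := fun x => (P {ω | ξ 0 ω > x}).toReal with hHdef
  have hGH : ∀ x, H x = 1 - G x := by
    intro x
    simp only [hGdef, hHdef]
    have hc : {ω | ξ 0 ω > x} = {ω | ξ 0 ω ≤ x}ᶜ := by
      ext ω; simp [not_le]
    rw [hc]
    have hmc : P ({ω | ξ 0 ω ≤ x}ᶜ) = P Set.univ - P {ω | ξ 0 ω ≤ x} :=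
      measure_compl (hmeas 0 measurableSet_Iic) (measure_ne_top P _)
    rw [hmc, measure_univ, ENNReal.toReal_sub_of_le prob_le_one ENNReal.one_ne_top,
      ENNReal.toReal_one]
  have hG0 : ∀ x, 0 ≤ G x := fun x => ENNReal.toReal_nonneg
  have hG1 : ∀ x, G x ≤ 1 := by
    intro x
    simp only [hGdef]
    have := ENNReal.toReal_mono ENNReal.one_ne_top (prob_le_one (μ := P) (s := {ω | ξ 0 ω ≤ x}))
    simpa using this
  have hHpos : ∀ x, 0 < H x := fun x =>
    ENNReal.toReal_pos (ne_of_gt (hpos x)) (measure_ne_top P _)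
  have hGlt1 : ∀ x, G x < 1 := by
    intro x
    have h1 := hHpos x
    rw [hGH x] at h1
    linarith
  -- H tends to zero at infinity
  have hH0 : Tendsto H atTop (nhds 0) := by
    have hseq : Tendsto (fun k : ℕ => P {ω | ξ 0 ω > (k:ℝ)}) atTop (nhds 0) := by
      have hiInter : ⋂ k : ℕ, {ω | ξ 0 ω > (k:ℝ)} = ∅ := by
        ext ω
        simp only [Set.mem_iInter, Set.mem_setOf_eq, Set.mem_empty_iff_false, iff_false,
          not_forall, not_lt]
        obtain ⟨k, hk⟩ := exists_nat_gt (ξ 0 ω)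
        exact ⟨k, hk.le⟩
      have hanti : Antitone (fun k : ℕ => {ω | ξ 0 ω > (k:ℝ)}) := by
        intro k l hkl
        intro ω h
        have hcast : ((k:ℕ):ℝ) ≤ ((l:ℕ):ℝ) := by exact_mod_cast hkl
        exact lt_of_le_of_lt hcast h
      have := tendsto_measure_iInter_atTop (μ := P) (s := fun k : ℕ => {ω | ξ 0 ω > (k:ℝ)})
        (fun k => ((hmeas 0) measurableSet_Ioi).nullMeasurableSet) hanti ⟨0, measure_ne_top P _⟩
      rw [hiInter] at this
      simpa [Function.comp_def] using this
    have hseqR : Tendsto (fun k : ℕ => (P {ω | ξ 0 ω > (k:ℝ)}).toReal) atTop (nhds 0) := by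
      have := (ENNReal.tendsto_toReal (a := 0) (by simp)).comp hseq
      simpa [Function.comp_def] using this
    have hupper : Tendsto (fun x : ℝ => (P {ω | ξ 0 ω > ((⌊x⌋₊ : ℕ):ℝ)}).toReal) atTop
        (nhds 0) := hseqR.comp tendsto_nat_floor_atTop
    apply tendsto_of_tendsto_of_tendsto_of_le_of_le' tendsto_const_nhds hupper
    · exact Eventually.of_forall (fun x => ENNReal.toReal_nonneg)
    · filter_upwards [eventually_ge_atTop (0:ℝ)] with x hx
      simp only [hHdef]
      apply ENNReal.toReal_mono (measure_ne_top P _)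
      apply measure_mono
      intro ω hω
      exact lt_of_le_of_lt (Nat.floor_le hx) hω
  -- w formula
  have hwW : ∀ n, w n = 1 - G (u n / c0) * G (u n / c1) := by
    intro n
    have hXle0 : {ω | X 0 ω > u n} = ((ξ 0 ⁻¹' Set.Iic (u n / c0)) ∩ (ξ 1 ⁻¹' Set.Iic (u n / c1)))ᶜ := by
      ext ω
      simp only [Set.mem_compl_iff, Set.mem_setOf_eq, Set.mem_inter_iff, Set.mem_preimage,
        Set.mem_Iic, not_and_or, not_le]
      rw [hX 0 ω]
      rw [show ((max (c0 * ξ 0 ω) (c1 * ξ (0 + 1) ω) > u n)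
          ↔ (u n < c0 * ξ 0 ω ∨ u n < c1 * ξ (0+1) ω)) from lt_max_iff]
      simp only [zero_add]
      constructor
      · rintro (h | h)
        · exact Or.inl ((div_lt_iff₀ hc0).mpr (by linarith [mul_comm c0 (ξ 0 ω)]))
        · exact Or.inr ((div_lt_iff₀ hc1).mpr (by linarith [mul_comm c1 (ξ 1 ω)]))
      · rintro (h | h)
        · refine Or.inl ?_
          have := (div_lt_iff₀ hc0).mp h
          linarith [mul_comm (ξ 0 ω) c0]
        · refine Or.inr ?_
          have := (div_lt_iff₀ hc1).mp h
          linarith [mul_comm (ξ 1 ω) c1]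
    have hprod : P ((ξ 0 ⁻¹' Set.Iic (u n / c0)) ∩ (ξ 1 ⁻¹' Set.Iic (u n / c1)))
        = P (ξ 0 ⁻¹' Set.Iic (u n / c0)) * P (ξ 0 ⁻¹' Set.Iic (u n / c1)) := by
      set sets : ℤ → Set ℝ := fun j => if j = 0 then Set.Iic (u n / c0) else Set.Iic (u n / c1)
        with hsets
      have hmeass : ∀ i ∈ ({0, 1} : Finset ℤ), MeasurableSet (sets i) := by
        intro i _; simp only [hsets]; split_ifs <;> exact measurableSet_Iic
      have := hindep.measure_inter_preimage_eq_mul ({0, 1} : Finset ℤ) hmeass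
      have hIeq : (⋂ i ∈ ({0, 1} : Finset ℤ), ξ i ⁻¹' sets i)
          = (ξ 0 ⁻¹' Set.Iic (u n / c0)) ∩ (ξ 1 ⁻¹' Set.Iic (u n / c1)) := by
        rw [show ({0, 1} : Finset ℤ) = insert 0 {1} from rfl, Finset.set_biInter_insert,
          Finset.set_biInter_singleton]
        simp only [hsets]
        norm_num
      have hPeq : (∏ i ∈ ({0, 1} : Finset ℤ), P (ξ i ⁻¹' sets i))
          = P (ξ 0 ⁻¹' Set.Iic (u n / c0)) * P (ξ 0 ⁻¹' Set.Iic (u n / c1)) := by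
        rw [show ({0, 1} : Finset ℤ) = insert 0 {1} from rfl,
          Finset.prod_insert (by norm_num), Finset.prod_singleton]
        simp only [hsets]
        norm_num
        rw [hident' 1 _ measurableSet_Iic]
      rw [hIeq, hPeq] at this
      exact this
    rw [hw n, hXle0, measure_compl ((hmeas 0 measurableSet_Iic).inter (hmeas 1 measurableSet_Iic))
      (measure_ne_top P _), measure_univ,
      ENNReal.toReal_sub_of_le prob_le_one ENNReal.one_ne_top, ENNReal.toReal_one, hprod,
      ENNReal.toReal_mul]
    rfl
  have hwpos : ∀ n, 0 < w n := by
    intro n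
    rw [hwW n]
    have h1 : G (u n / c0) * G (u n / c1) ≤ G (u n / c0) :=
      mul_le_of_le_one_right (hG0 _) (hG1 _)
    have h2 := hGlt1 (u n / c0)
    linarith
  -- abbreviations
  set M : ℕ → ℝ := fun n => min (u n / c0) (u n / c1) with hMdef
  set wt : ℕ → ℤ → ℤ → ℝ := fun n a b => max (((b - a - (r n : ℤ)):ℤ):ℝ) 0 with hwtdef
  set I1 : ℕ → Finset ℤ := fun n => Finset.Icc 1 (r n : ℤ) with hI1def
  set I2 : ℕ → Finset ℤ := fun n => Finset.Icc ((r n : ℤ)+1) (2*(r n : ℤ)) with hI2def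
  set Bs : ℕ → ℤ → ℤ → Set Ω := fun n a b =>
    {ω | X a ω > u n} ∩ {ω | ∀ i : ℤ, a < i → i < b → X i ω ≤ u n} ∩ {ω | X b ω > u n} with hBdef
  have hmeasB : ∀ n (a b : ℤ), MeasurableSet (Bs n a b) := by
    intro n a b
    simp only [hBdef]
    have hm2 : MeasurableSet {ω | ∀ i : ℤ, a < i → i < b → X i ω ≤ u n} := by
      have : {ω | ∀ i : ℤ, a < i → i < b → X i ω ≤ u n}
          = ⋂ i : ℤ, ⋂ (_ : a < i), ⋂ (_ : i < b), {ω | X i ω ≤ u n} := by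
        ext ω; simp only [Set.mem_setOf_eq, Set.mem_iInter]
      rw [this]
      exact MeasurableSet.iInter fun i => MeasurableSet.iInter fun _ =>
        MeasurableSet.iInter fun _ => hXmeas i measurableSet_Iic
    exact ((hXmeas a measurableSet_Ioi).inter hm2).inter (hXmeas b measurableSet_Ioi)
  -- Step 1: the integral as a double sum
  have hInt : ∀ n, (∫ ω in (A n 1 ∩ A n 2),
        max ((tfirst n 2 ω - tlast n 1 ω - (r n : ℤ) : ℤ) : ℝ) 0 ∂P)
      = ∑ a ∈ I1 n, ∑ b ∈ I2 n, wt n a b * (P (Bs n a b)).toReal := by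
    intro n
    have hA1eq : A n 1 = {ω | ∃ i : ℤ, 1 ≤ i ∧ i ≤ (r n:ℤ) ∧ X i ω > u n} := by
      rw [hA n 1]
      ext ω
      simp only [Set.mem_setOf_eq]
      constructor <;> rintro ⟨i, h1, h2, h3⟩ <;> exact ⟨i, by linarith, by linarith, h3⟩
    have hA2eq : A n 2 = {ω | ∃ i : ℤ, (r n:ℤ)+1 ≤ i ∧ i ≤ 2*(r n:ℤ) ∧ X i ω > u n} := by
      rw [hA n 2]
      ext ω
      simp only [Set.mem_setOf_eq]
      constructor <;> rintro ⟨i, h1, h2, h3⟩ <;> exact ⟨i, by linarith, by linarith, h3⟩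
    have hmeasA : MeasurableSet (A n 1 ∩ A n 2) := by
      have hmk : ∀ (S : Set Ω) (c d : ℤ), S = {ω | ∃ i : ℤ, c ≤ i ∧ i ≤ d ∧ X i ω > u n}
          → MeasurableSet S := by
        intro S c d hS
        rw [hS]
        have : {ω | ∃ i : ℤ, c ≤ i ∧ i ≤ d ∧ X i ω > u n}
            = ⋃ i : ℤ, ⋃ (_ : c ≤ i ∧ i ≤ d), {ω | X i ω > u n} := by
          ext ω; simp only [Set.mem_iUnion, Set.mem_setOf_eq]; tauto
        rw [this]
        exact MeasurableSet.iUnion fun i => MeasurableSet.iUnion fun _ =>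
          hXmeas i measurableSet_Ioi
      exact (hmk _ _ _ hA1eq).inter (hmk _ _ _ hA2eq)
    have hpoint : ∀ ω, (A n 1 ∩ A n 2).indicator
          (fun ω => max ((tfirst n 2 ω - tlast n 1 ω - (r n : ℤ) : ℤ) : ℝ) 0) ω
        = ∑ a ∈ I1 n, ∑ b ∈ I2 n, (Bs n a b).indicator (fun _ => wt n a b) ω := by
      intro ω
      by_cases hmem : ω ∈ A n 1 ∩ A n 2
      · set S1 : Set ℤ := {i : ℤ | 1 ≤ i ∧ i ≤ (r n:ℤ) ∧ X i ω > u n} with hS1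
        set S2 : Set ℤ := {i : ℤ | (r n:ℤ)+1 ≤ i ∧ i ≤ 2*(r n:ℤ) ∧ X i ω > u n} with hS2
        have hne1 : S1.Nonempty := by
          have h := hmem.1
          rw [hA1eq] at h
          obtain ⟨i, h1, h2, h3⟩ := h
          exact ⟨i, h1, h2, h3⟩
        have hne2 : S2.Nonempty := by
          have h := hmem.2
          rw [hA2eq] at h
          obtain ⟨i, h1, h2, h3⟩ := h
          exact ⟨i, h1, h2, h3⟩
        have hfin1 : S1.Finite := (Set.finite_Icc (1:ℤ) (r n:ℤ)).subset
          (fun i hi => Set.mem_Icc.mpr ⟨hi.1, hi.2.1⟩)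
        have hfin2 : S2.Finite := (Set.finite_Icc ((r n:ℤ)+1) (2*(r n:ℤ))).subset
          (fun i hi => Set.mem_Icc.mpr ⟨hi.1, hi.2.1⟩)
        have ha0 : sSup S1 ∈ S1 := hne1.csSup_mem hfin1
        have hub : ∀ i ∈ S1, i ≤ sSup S1 := fun i hi => le_csSup hfin1.bddAbove hi
        have hb0 : sInf S2 ∈ S2 := hne2.csInf_mem hfin2
        have hlb : ∀ i ∈ S2, sInf S2 ≤ i := fun i hi => csInf_le hfin2.bddBelow hi
        have htl : tlast n 1 ω = sSup S1 := by
          rw [htlast n 1 ω]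
          congr 1
          ext i
          simp only [Set.mem_setOf_eq, hS1]
          constructor <;> rintro ⟨h1, h2, h3⟩ <;> exact ⟨by linarith, by linarith, h3⟩
        have htf : tfirst n 2 ω = sInf S2 := by
          rw [htfirst n 2 ω]
          congr 1
          ext i
          simp only [Set.mem_setOf_eq, hS2]
          constructor <;> rintro ⟨h1, h2, h3⟩ <;> exact ⟨by linarith, by linarith, h3⟩
        have hwB : ω ∈ Bs n (sSup S1) (sInf S2) := by
          refine ⟨⟨ha0.2.2, ?_⟩, hb0.2.2⟩
          intro i hi1 hi2
          by_contra hc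
          push_neg at hc
          rcases le_or_gt i (r n:ℤ) with hle | hgt
          · have hiS : i ∈ S1 := ⟨by linarith [ha0.1], hle, hc⟩
            linarith [hub i hiS]
          · have hiS : i ∈ S2 := ⟨by linarith, by linarith [hb0.2.1], hc⟩
            linarith [hlb i hiS]
        have ha0I : sSup S1 ∈ I1 n := by
          simp only [hI1def]
          exact Finset.mem_Icc.mpr ⟨ha0.1, ha0.2.1⟩
        have hb0I : sInf S2 ∈ I2 n := by
          simp only [hI2def]
          exact Finset.mem_Icc.mpr ⟨hb0.1, hb0.2.1⟩
        have huniq : ∀ a b : ℤ, a ∈ I1 n → b ∈ I2 n → ω ∈ Bs n a b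
            → a = sSup S1 ∧ b = sInf S2 := by
          intro a b hai hbi hB
          simp only [hI1def, Finset.mem_Icc] at hai
          simp only [hI2def, Finset.mem_Icc] at hbi
          obtain ⟨⟨hXa, hm⟩, hXb⟩ := hB
          have haS : a ∈ S1 := ⟨hai.1, hai.2, hXa⟩
          have hbS : b ∈ S2 := ⟨hbi.1, hbi.2, hXb⟩
          have h1 : a ≤ sSup S1 := hub a haS
          have h2 : sInf S2 ≤ b := hlb b hbS
          constructor
          · by_contra hne
            have hlt : a < sSup S1 := lt_of_le_of_ne h1 hne
            have hXle : X (sSup S1) ω ≤ u n := hm (sSup S1) hlt (by linarith [ha0.2.1, hbi.1])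
            linarith [ha0.2.2]
          · by_contra hne
            have hlt : sInf S2 < b := lt_of_le_of_ne h2 (Ne.symm hne)
            have hXle : X (sInf S2) ω ≤ u n := hm (sInf S2) (by linarith [hb0.1, hai.2]) hlt
            linarith [hb0.2.2]
        rw [Set.indicator_of_mem hmem]
        rw [Finset.sum_eq_single_of_mem (sSup S1) ha0I
          (fun a haI hane => Finset.sum_eq_zero fun b hbI =>
            Set.indicator_of_notMem (fun hc => hane (huniq a b haI hbI hc).1) _)]
        rw [Finset.sum_eq_single_of_mem (sInf S2) hb0I
          (fun b hbI hbne =>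
            Set.indicator_of_notMem (fun hc => hbne (huniq (sSup S1) b ha0I hbI hc).2) _)]
        rw [Set.indicator_of_mem hwB, htl, htf]
      · rw [Set.indicator_of_notMem hmem]
        symm
        apply Finset.sum_eq_zero
        intro a haI
        apply Finset.sum_eq_zero
        intro b hbI
        simp only [hI1def, Finset.mem_Icc] at haI
        simp only [hI2def, Finset.mem_Icc] at hbI
        apply Set.indicator_of_notMem
        intro hc
        apply hmem
        obtain ⟨⟨hXa, hm⟩, hXb⟩ := hc
        constructor
        · rw [hA1eq]; exact ⟨a, haI.1, haI.2, hXa⟩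
        · rw [hA2eq]; exact ⟨b, hbI.1, hbI.2, hXb⟩
    rw [← integral_indicator hmeasA]
    rw [integral_congr_ae (Eventually.of_forall hpoint)]
    rw [integral_finset_sum _ (fun a _ => integrable_finset_sum _
      (fun b _ => (integrable_const _).indicator (hmeasB n a b)))]
    refine Finset.sum_congr rfl fun a _ => ?_
    rw [integral_finset_sum _ (fun b _ => (integrable_const _).indicator (hmeasB n a b))]
    refine Finset.sum_congr rfl fun b _ => ?_
    rw [integral_indicator_const _ (hmeasB n a b), smul_eq_mul, mul_comm]; rfl
  -- Step 2: per-term formula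
  have hterm : ∀ n, ∀ a ∈ I1 n, ∀ b ∈ I2 n, wt n a b * (P (Bs n a b)).toReal
      = (G (u n / c0) * G (u n / c1) * (H (M n))^2) * (wt n a b * (G (M n))^((b-a-2).toNat)) := by
    intro n a ha b hb
    rcases le_or_gt (b - a - (r n:ℤ)) 0 with h0 | h0
    · have hwt0 : wt n a b = 0 := by
        simp only [hwtdef]
        apply max_eq_right
        exact_mod_cast h0
      rw [hwt0]
      ring
    · have hR1 : (1:ℤ) ≤ (r n:ℤ) := by exact_mod_cast hrpos n
      have hab : a + 2 ≤ b := by omega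
      have hpB := prob_B P ξ hmeas hindep hident c0 c1 hc0 hc1 X hX (u n) a b hab
      simp only [hBdef, hGdef, hHdef, hMdef]
      rw [hpB]
      ring
  set wsum : ℕ → ℝ := fun n => ∑ a ∈ I1 n, ∑ b ∈ I2 n, wt n a b * (G (M n))^((b-a-2).toNat)
    with hwsumdef
  have hInt2 : ∀ n, (∫ ω in (A n 1 ∩ A n 2),
        max ((tfirst n 2 ω - tlast n 1 ω - (r n : ℤ) : ℤ) : ℝ) 0 ∂P)
      = (G (u n / c0) * G (u n / c1) * (H (M n))^2) * wsum n := by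
    intro n
    rw [hInt n]
    simp only [hwsumdef]
    rw [Finset.mul_sum]
    refine Finset.sum_congr rfl fun a ha => ?_
    rw [Finset.mul_sum]
    exact Finset.sum_congr rfl fun b hb => hterm n a ha b hb
  -- limits
  have hlimG0 : Tendsto (fun n => G (u n / c0)) atTop (nhds 1) := by
    have h1 : Tendsto (fun n => H (u n / c0)) atTop (nhds 0) :=
      hH0.comp (hu.atTop_div_const hc0)
    have h2 : Tendsto (fun n => 1 - H (u n / c0)) atTop (nhds (1 - 0)) :=
      tendsto_const_nhds.sub h1
    have h3 := h2.congr (fun n => by have := hGH (u n / c0); linarith)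
    simpa using h3
  have hlimG1 : Tendsto (fun n => G (u n / c1)) atTop (nhds 1) := by
    have h1 : Tendsto (fun n => H (u n / c1)) atTop (nhds 0) :=
      hH0.comp (hu.atTop_div_const hc1)
    have h2 : Tendsto (fun n => 1 - H (u n / c1)) atTop (nhds (1 - 0)) :=
      tendsto_const_nhds.sub h1
    have h3 := h2.congr (fun n => by have := hGH (u n / c1); linarith)
    simpa using h3
  have hRVH : ∀ t : ℝ, 0 < t → Tendsto (fun n => H (t * u n) / H (u n)) atTop
      (nhds (t ^ (-α))) := by
    intro t ht
    have := (hRV t ht).comp hu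
    exact this
  have hratio : ∀ c : ℝ, (hc : 0 < c) → Tendsto (fun n => H (u n / c) / H (u n)) atTop
      (nhds (c ^ α)) := by
    intro c hc
    have hb := hRVH (1/c) (by positivity)
    have hval : ((1/c):ℝ) ^ (-α) = c ^ α := by
      rw [one_div, Real.inv_rpow hc.le, Real.rpow_neg hc.le, inv_inv]
    rw [hval] at hb
    apply hb.congr
    intro n
    rw [one_div_mul_eq_div]
  have hlimHM : Tendsto (fun n => H (M n) / w n) atTop
      (nhds ((max c0 c1) ^ α / (c0 ^ α + c1 ^ α))) := by
    have hnum : Tendsto (fun n => H (M n) / H (u n)) atTop (nhds ((max c0 c1) ^ α)) := by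
      have hb := hratio (max c0 c1) hmax
      apply hb.congr'
      filter_upwards [hu.eventually_ge_atTop 0] with n hn
      have hMe : u n / max c0 c1 = M n := by
        simp only [hMdef]
        rcases le_total c0 c1 with h | h
        · rw [max_eq_right h, min_eq_right]
          rw [div_le_div_iff₀ hc1 hc0]
          exact mul_le_mul_of_nonneg_left h hn
        · rw [max_eq_left h, min_eq_left]
          rw [div_le_div_iff₀ hc0 hc1]
          exact mul_le_mul_of_nonneg_left h hn
      rw [hMe]
    have h2 : Tendsto (fun n => H (u n / c1)) atTop (nhds 0) :=
      hH0.comp (hu.atTop_div_const hc1)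
    have hcomb := ((hratio c0 hc0).add (hratio c1 hc1)).sub ((hratio c0 hc0).mul h2)
    have hden : Tendsto (fun n => w n / H (u n)) atTop (nhds (c0 ^ α + c1 ^ α)) := by
      have hGH' : ∀ x, G x = 1 - H x := fun x => by have := hGH x; linarith
      have hwH : ∀ n, w n = H (u n / c0) + H (u n / c1) - H (u n / c0) * H (u n / c1) := by
        intro n
        rw [hwW n, hGH' (u n / c0), hGH' (u n / c1)]
        ring
      have heq : ∀ n, H (u n / c0) / H (u n) + H (u n / c1) / H (u n)
          - (H (u n / c0) / H (u n)) * H (u n / c1) = w n / H (u n) := by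
        intro n
        have hne : H (u n) ≠ 0 := (hHpos (u n)).ne'
        rw [hwH n]
        field_simp
      have := hcomb.congr heq
      have hval : c0 ^ α + c1 ^ α - c0 ^ α * 0 = c0 ^ α + c1 ^ α := by ring
      rwa [hval] at this
    have hdenne : c0 ^ α + c1 ^ α ≠ 0 := by positivity
    have := hnum.div hden hdenne
    apply this.congr
    intro n
    have hq : H (u n) ≠ 0 := (hHpos (u n)).ne'
    have hwne : w n ≠ 0 := (hwpos n).ne'
    simp only [Pi.div_apply]
    field_simp
  -- limit of the normalized sum
  have hlimS : Tendsto (fun n => wsum n / (r n:ℝ)^3) atTop (nhds (1/6)) := by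
    have hrne : ∀ n, (r n:ℝ) ≠ 0 := fun n => ne_of_gt (by exact_mod_cast hrpos n)
    have hTsum : ∀ n, ∑ a ∈ I1 n, ∑ b ∈ I2 n, wt n a b
        = ((r n:ℝ)*((r n:ℝ)+1)*((r n:ℝ)-1))/6 := by
      intro n
      simp only [hI1def, hI2def, hwtdef]
      exact sum_wt (r n)
    have hwtnn : ∀ n (a b : ℤ), 0 ≤ wt n a b := by
      intro n a b; simp only [hwtdef]; exact le_max_right _ _
    have hup : ∀ n, wsum n ≤ ((r n:ℝ)*((r n:ℝ)+1)*((r n:ℝ)-1))/6 := by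
      intro n
      rw [← hTsum n]
      simp only [hwsumdef]
      refine Finset.sum_le_sum fun a ha => Finset.sum_le_sum fun b hb => ?_
      exact mul_le_of_le_one_right (hwtnn n a b) (pow_le_one₀ (hG0 _) (hG1 _))
    have hlow : ∀ n, (G (M n))^(2*r n) * (((r n:ℝ)*((r n:ℝ)+1)*((r n:ℝ)-1))/6) ≤ wsum n := by
      intro n
      rw [← hTsum n, Finset.mul_sum]
      simp only [hwsumdef]
      refine Finset.sum_le_sum fun a ha => ?_
      rw [Finset.mul_sum]
      refine Finset.sum_le_sum fun b hb => ?_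
      simp only [hI1def, Finset.mem_Icc] at ha
      simp only [hI2def, Finset.mem_Icc] at hb
      rw [mul_comm ((G (M n))^(2*r n)) (wt n a b)]
      apply mul_le_mul_of_nonneg_left _ (hwtnn n a b)
      apply pow_le_pow_of_le_one (hG0 _) (hG1 _)
      omega
    have hTlim : Tendsto (fun n => (((r n:ℝ)*((r n:ℝ)+1)*((r n:ℝ)-1))/6) / (r n:ℝ)^3) atTop
        (nhds (1/6)) := by
      have hinv : Tendsto (fun n => ((r n:ℝ))⁻¹) atTop (nhds 0) :=
        tendsto_inv_atTop_zero.comp hr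
      have hl : Tendsto (fun n => (1 - ((r n:ℝ)⁻¹)^2)/6) atTop (nhds ((1 - 0^2)/6)) :=
        (tendsto_const_nhds.sub (hinv.pow 2)).div_const 6
      have heq : ∀ n, (1 - ((r n:ℝ)⁻¹)^2)/6
          = (((r n:ℝ)*((r n:ℝ)+1)*((r n:ℝ)-1))/6) / (r n:ℝ)^3 := by
        intro n
        have h0 := hrne n
        field_simp
        ring
      have hv : ((1:ℝ) - 0^2)/6 = 1/6 := by norm_num
      rw [hv] at hl
      exact hl.congr heq
    have hgMr : Tendsto (fun n => (G (M n))^(2 * r n)) atTop (nhds 1) := by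
      have hHMw : ∀ n, 1 - G (M n) ≤ w n := by
        intro n
        rw [hwW n]
        have hgle : G (u n/c0) * G (u n/c1) ≤ G (M n) := by
          simp only [hMdef]
          rcases min_choice (u n/c0) (u n/c1) with h | h <;> rw [h]
          · exact mul_le_of_le_one_right (hG0 _) (hG1 _)
          · exact mul_le_of_le_one_left (hG0 _) (hG1 _)
        linarith
      have h1mG : ∀ n, 0 ≤ 1 - G (M n) := fun n => by linarith [hG1 (M n)]
      have hr1m : Tendsto (fun n => (r n:ℝ) * (1 - G (M n))) atTop (nhds 0) := by
        apply tendsto_of_tendsto_of_tendsto_of_le_of_le tendsto_const_nhds hrw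
        · intro n
          exact mul_nonneg (by positivity) (h1mG n)
        · intro n
          exact mul_le_mul_of_nonneg_left (hHMw n) (by positivity)
      have hlow2 : ∀ n, 1 - 2*((r n:ℝ)*(1 - G (M n))) ≤ (G (M n))^(2*r n) := by
        intro n
        have hB := one_add_mul_le_pow (a := G (M n) - 1) (by linarith [hG0 (M n)]) (2*r n)
        have he : (1:ℝ) + (G (M n) - 1) = G (M n) := by ring
        rw [he] at hB
        calc 1 - 2*((r n:ℝ)*(1 - G (M n))) = 1 + ((2*r n : ℕ):ℝ)*(G (M n) - 1) := by
              push_cast; ring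
        _ ≤ _ := hB
      have hlowlim : Tendsto (fun n => 1 - 2*((r n:ℝ)*(1 - G (M n)))) atTop
          (nhds (1 - 2*0)) := tendsto_const_nhds.sub (hr1m.const_mul 2)
      norm_num at hlowlim
      apply tendsto_of_tendsto_of_tendsto_of_le_of_le hlowlim tendsto_const_nhds hlow2
      intro n
      exact pow_le_one₀ (hG0 _) (hG1 _)
    have hprodlim := hgMr.mul hTlim
    rw [one_mul] at hprodlim
    apply tendsto_of_tendsto_of_tendsto_of_le_of_le hprodlim hTlim
    · intro n
      have hrpos' : (0:ℝ) < (r n:ℝ) := by exact_mod_cast hrpos n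
      have h3 : (0:ℝ) < (r n:ℝ)^3 := pow_pos hrpos' 3
      calc (G (M n))^(2*r n) * ((((r n:ℝ)*((r n:ℝ)+1)*((r n:ℝ)-1))/6) / (r n:ℝ)^3)
          = ((G (M n))^(2*r n) * (((r n:ℝ)*((r n:ℝ)+1)*((r n:ℝ)-1))/6)) / (r n:ℝ)^3 := by
            ring
      _ ≤ wsum n / (r n:ℝ)^3 := by
            exact (div_le_div_iff_of_pos_right h3).mpr (hlow n)
    · intro n
      have hrpos' : (0:ℝ) < (r n:ℝ) := by exact_mod_cast hrpos n
      have h3 : (0:ℝ) < (r n:ℝ)^3 := pow_pos hrpos' 3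
      exact (div_le_div_iff_of_pos_right h3).mpr (hup n)
  -- final assembly
  have hfinal := ((hlimG0.mul hlimG1).mul (hlimHM.pow 2)).mul hlimS
  have hgoal_eq : ∀ n, (1 / ((r n : ℝ) ^ 3 * w n ^ 2)) *
        (∫ ω in (A n 1 ∩ A n 2),
          max ((tfirst n 2 ω - tlast n 1 ω - (r n : ℤ) : ℤ) : ℝ) 0 ∂P)
      = (G (u n / c0) * G (u n / c1)) * (H (M n) / w n)^2 * (wsum n / (r n:ℝ)^3) := by
    intro n
    rw [hInt2 n]
    have hwne : w n ≠ 0 := (hwpos n).ne'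
    have hrne : (r n:ℝ) ≠ 0 := ne_of_gt (by exact_mod_cast hrpos n)
    field_simp
  have hfinal2 := hfinal.congr (fun n => (hgoal_eq n).symm)
  have hv : θ ^ 2 / 6 = 1 * 1 * ((max c0 c1) ^ α / (c0 ^ α + c1 ^ α)) ^ 2 * (1/6) := by
    rw [hθ]; ring
  rw [hv]
  exact hfinal2
end
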